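/- Let X be a random variable with E|X| < ∞ and characteristic function f(t) = E e^{itX}. Then for all t ∈ ℝ, |f(t) − 1| ≤ κ₁ |t| E|X| + (sin θ₁*/θ₁*)·|t|·|E X|, where θ₁* ∈ (0,π) is the unique root of x sin x + cos x − 1 = 0, κ₁ = (1 − cos θ₁*)/θ₁*; in particular if E X = 0 then |f(t) − 1| ≤ 0.7247·|t|·E|X|. -/

import Mathlib

open MeasureTheory
set_option maxHeartbeats 2000000

lemma abs_poly14_le (d h : ℝ) (hd : |d| ≤ h) (b1 a1 : ℝ) (e1 : |b1| ≤ a1) (b2 a2 : ℝ) (e2 : |b2| ≤ a2) (b3 a3 : ℝ) (e3 : |b3| ≤ a3) (b4 a4 : ℝ) (e4 : |b4| ≤ a4) (b5 a5 : ℝ) (e5 : |b5| ≤ a5) (b6 a6 : ℝ) (e6 : |b6| ≤ a6) (b7 a7 : ℝ) (e7 : |b7| ≤ a7) (b8 a8 : ℝ) (e8 : |b8| ≤ a8) (b9 a9 : ℝ) (e9 : |b9| ≤ a9) (b10 a10 : ℝ) (e10 : |b10| ≤ a10) (b11 a11 : ℝ) (e11 : |b11| ≤ a11) (b12 a12 :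 ℝ) (e12 : |b12| ≤ a12) (b13 a13 : ℝ) (e13 : |b13| ≤ a13) (b14 a14 : ℝ) (e14 : |b14| ≤ a14) :
    |b1 * d ^ 1 + (b2 * d ^ 2 + (b3 * d ^ 3 + (b4 * d ^ 4 + (b5 * d ^ 5 + (b6 * d ^ 6 + (b7 * d ^ 7 + (b8 * d ^ 8 + (b9 * d ^ 9 + (b10 * d ^ 10 + (b11 * d ^ 11 + (b12 * d ^ 12 + (b13 * d ^ 13 + (b14 * d ^ 14)))))))))))))| ≤ a1 * h ^ 1 + (a2 * h ^ 2 + (a3 * h ^ 3 + (a4 * h ^ 4 + (a5 * h ^ 5 + (a6 * h ^ 6 + (a7 * h ^ 7 + (a8 * h ^ 8 + (a9 * h ^ 9 + (a10 * h ^ 10 + (a11 * h ^ 11 + (a12 * h ^ 12 + (a13 * h ^ 13 + (a14 * h ^ 14))))))))))))) := by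
  have key : ∀ (k : ℕ) (b a : ℝ), |b| ≤ a → |b * d ^ k| ≤ a * h ^ k := fun k b a hba => by
    rw [abs_mul, abs_pow]
    exact mul_le_mul hba (pow_le_pow_left₀ (abs_nonneg d) hd k) (pow_nonneg (abs_nonneg d) k)
      ((abs_nonneg b).trans hba)
  have t14 := key 14 b14 a14 e14
  have t13 : |b13 * d ^ 13 + (b14 * d ^ 14)| ≤ a13 * h ^ 13 + (a14 * h ^ 14) := (abs_add_le _ _).trans (add_le_add (key 13 b13 a13 e13) t14)
  have t12 : |b12 * d ^ 12 + (b13 * d ^ 13 + (b14 * d ^ 14))| ≤ a12 * h ^ 12 + (a13 * h ^ 13 + (a14 * h ^ 14)) := (abs_add_le _ _).trans (add_le_add (key 12 b12 a12 e12) t13)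
  have t11 : |b11 * d ^ 11 + (b12 * d ^ 12 + (b13 * d ^ 13 + (b14 * d ^ 14)))| ≤ a11 * h ^ 11 + (a12 * h ^ 12 + (a13 * h ^ 13 + (a14 * h ^ 14))) := (abs_add_le _ _).trans (add_le_add (key 11 b11 a11 e11) t12)
  have t10 : |b10 * d ^ 10 + (b11 * d ^ 11 + (b12 * d ^ 12 + (b13 * d ^ 13 + (b14 * d ^ 14))))| ≤ a10 * h ^ 10 + (a11 * h ^ 11 + (a12 * h ^ 12 + (a13 * h ^ 13 + (a14 * h ^ 14)))) := (abs_add_le _ _).trans (add_le_add (key 10 b10 a10 e10) t11)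
  have t9 : |b9 * d ^ 9 + (b10 * d ^ 10 + (b11 * d ^ 11 + (b12 * d ^ 12 + (b13 * d ^ 13 + (b14 * d ^ 14)))))| ≤ a9 * h ^ 9 + (a10 * h ^ 10 + (a11 * h ^ 11 + (a12 * h ^ 12 + (a13 * h ^ 13 + (a14 * h ^ 14))))) := (abs_add_le _ _).trans (add_le_add (key 9 b9 a9 e9) t10)
  have t8 : |b8 * d ^ 8 + (b9 * d ^ 9 + (b10 * d ^ 10 + (b11 * d ^ 11 + (b12 * d ^ 12 + (b13 * d ^ 13 + (b14 * d ^ 14))))))| ≤ a8 * h ^ 8 + (a9 * h ^ 9 + (a10 * h ^ 10 + (a11 * h ^ 11 + (a12 * h ^ 12 + (a13 * h ^ 13 + (a14 * h ^ 14)))))) := (abs_add_le _ _).trans (add_le_add (key 8 b8 a8 e8) t9)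
  have t7 : |b7 * d ^ 7 + (b8 * d ^ 8 + (b9 * d ^ 9 + (b10 * d ^ 10 + (b11 * d ^ 11 + (b12 * d ^ 12 + (b13 * d ^ 13 + (b14 * d ^ 14)))))))| ≤ a7 * h ^ 7 + (a8 * h ^ 8 + (a9 * h ^ 9 + (a10 * h ^ 10 + (a11 * h ^ 11 + (a12 * h ^ 12 + (a13 * h ^ 13 + (a14 * h ^ 14))))))) := (abs_add_le _ _).trans (add_le_add (key 7 b7 a7 e7) t8)
  have t6 : |b6 * d ^ 6 + (b7 * d ^ 7 + (b8 * d ^ 8 + (b9 * d ^ 9 + (b10 * d ^ 10 + (b11 * d ^ 11 + (b12 * d ^ 12 + (b13 * d ^ 13 + (b14 * d ^ 14))))))))| ≤ a6 * h ^ 6 + (a7 * h ^ 7 + (a8 * h ^ 8 + (a9 * h ^ 9 + (a10 * h ^ 10 + (a11 * h ^ 11 + (a12 * h ^ 12 + (a13 * h ^ 13 + (a14 * h ^ 14)))))))) := (abs_add_le _ _).trans (add_le_add (key 6 b6 a6 e6) t7)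
  have t5 : |b5 * d ^ 5 + (b6 * d ^ 6 + (b7 * d ^ 7 + (b8 * d ^ 8 + (b9 * d ^ 9 + (b10 * d ^ 10 + (b11 * d ^ 11 + (b12 * d ^ 12 + (b13 * d ^ 13 + (b14 * d ^ 14)))))))))| ≤ a5 * h ^ 5 + (a6 * h ^ 6 + (a7 * h ^ 7 + (a8 * h ^ 8 + (a9 * h ^ 9 + (a10 * h ^ 10 + (a11 * h ^ 11 + (a12 * h ^ 12 + (a13 * h ^ 13 + (a14 * h ^ 14))))))))) := (abs_add_le _ _).trans (add_le_add (key 5 b5 a5 e5) t6)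
  have t4 : |b4 * d ^ 4 + (b5 * d ^ 5 + (b6 * d ^ 6 + (b7 * d ^ 7 + (b8 * d ^ 8 + (b9 * d ^ 9 + (b10 * d ^ 10 + (b11 * d ^ 11 + (b12 * d ^ 12 + (b13 * d ^ 13 + (b14 * d ^ 14))))))))))| ≤ a4 * h ^ 4 + (a5 * h ^ 5 + (a6 * h ^ 6 + (a7 * h ^ 7 + (a8 * h ^ 8 + (a9 * h ^ 9 + (a10 * h ^ 10 + (a11 * h ^ 11 + (a12 * h ^ 12 + (a13 * h ^ 13 + (a14 * h ^ 14)))))))))) := (abs_add_le _ _).trans (add_le_add (key 4 b4 a4 e4) t5)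
  have t3 : |b3 * d ^ 3 + (b4 * d ^ 4 + (b5 * d ^ 5 + (b6 * d ^ 6 + (b7 * d ^ 7 + (b8 * d ^ 8 + (b9 * d ^ 9 + (b10 * d ^ 10 + (b11 * d ^ 11 + (b12 * d ^ 12 + (b13 * d ^ 13 + (b14 * d ^ 14)))))))))))| ≤ a3 * h ^ 3 + (a4 * h ^ 4 + (a5 * h ^ 5 + (a6 * h ^ 6 + (a7 * h ^ 7 + (a8 * h ^ 8 + (a9 * h ^ 9 + (a10 * h ^ 10 + (a11 * h ^ 11 + (a12 * h ^ 12 + (a13 * h ^ 13 + (a14 * h ^ 14))))))))))) := (abs_add_le _ _).trans (add_le_add (key 3 b3 a3 e3) t4)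
  have t2 : |b2 * d ^ 2 + (b3 * d ^ 3 + (b4 * d ^ 4 + (b5 * d ^ 5 + (b6 * d ^ 6 + (b7 * d ^ 7 + (b8 * d ^ 8 + (b9 * d ^ 9 + (b10 * d ^ 10 + (b11 * d ^ 11 + (b12 * d ^ 12 + (b13 * d ^ 13 + (b14 * d ^ 14))))))))))))| ≤ a2 * h ^ 2 + (a3 * h ^ 3 + (a4 * h ^ 4 + (a5 * h ^ 5 + (a6 * h ^ 6 + (a7 * h ^ 7 + (a8 * h ^ 8 + (a9 * h ^ 9 + (a10 * h ^ 10 + (a11 * h ^ 11 + (a12 * h ^ 12 + (a13 * h ^ 13 + (a14 * h ^ 14)))))))))))) := (abs_add_le _ _).trans (add_le_add (key 2 b2 a2 e2) t3)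
  have t1 : |b1 * d ^ 1 + (b2 * d ^ 2 + (b3 * d ^ 3 + (b4 * d ^ 4 + (b5 * d ^ 5 + (b6 * d ^ 6 + (b7 * d ^ 7 + (b8 * d ^ 8 + (b9 * d ^ 9 + (b10 * d ^ 10 + (b11 * d ^ 11 + (b12 * d ^ 12 + (b13 * d ^ 13 + (b14 * d ^ 14)))))))))))))| ≤ a1 * h ^ 1 + (a2 * h ^ 2 + (a3 * h ^ 3 + (a4 * h ^ 4 + (a5 * h ^ 5 + (a6 * h ^ 6 + (a7 * h ^ 7 + (a8 * h ^ 8 + (a9 * h ^ 9 + (a10 * h ^ 10 + (a11 * h ^ 11 + (a12 * h ^ 12 + (a13 * h ^ 13 + (a14 * h ^ 14))))))))))))) := (abs_add_le _ _).trans (add_le_add (key 1 b1 a1 e1) t2)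
  exact t1

lemma aux_nonneg (F F' : ℝ → ℝ) (hd : ∀ x, HasDerivAt F (F' x) x) (h0 : F 0 = 0)
    (hF' : ∀ x, 0 ≤ x → 0 ≤ F' x) : ∀ x, 0 ≤ x → 0 ≤ F x := by
  intro x hx
  have hm : MonotoneOn F (Set.Ici (0:ℝ)) := by
    apply monotoneOn_of_hasDerivWithinAt_nonneg (convex_Ici 0)
      (fun y _ => (hd y).continuousAt.continuousWithinAt)
      (fun y _ => (hd y).hasDerivWithinAt)
    intro y hy
    rw [interior_Ici] at hy
    exact hF' y (le_of_lt hy)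
  have h2 := hm Set.self_mem_Ici (Set.mem_Ici.mpr hx) hx
  rw [h0] at h2
  exact h2

lemma lad_c2 : ∀ x : ℝ, 0 ≤ x → 0 ≤ Real.cos x - ((1 : ℝ) + (-1/2 : ℝ) * x ^ 2) := by
  have hder : ∀ x : ℝ, HasDerivAt (fun x : ℝ => Real.cos x - ((1 : ℝ) + (-1/2 : ℝ) * x ^ 2)) (x - Real.sin x) x := by
    intro x
    have h0 := (Real.hasDerivAt_cos x).sub ((hasDerivAt_const x (1 : ℝ)).add ((hasDerivAt_pow 2 x).const_mul (-1/2 : ℝ)))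
    refine h0.congr_deriv ?_
    push_cast
    ring
  exact aux_nonneg _ _ hder (by norm_num) (fun z hz => by
      rcases eq_or_lt_of_le hz with h | h
      · simp [← h]
      · linarith [Real.sin_lt h])

lemma lad_s3 : ∀ x : ℝ, 0 ≤ x → 0 ≤ Real.sin x - ((1 : ℝ) * x ^ 1 + (-1/6 : ℝ) * x ^ 3) := by
  have hder : ∀ x : ℝ, HasDerivAt (fun x : ℝ => Real.sin x - ((1 : ℝ) * x ^ 1 + (-1/6 : ℝ) * x ^ 3)) (Real.cos x - ((1 : ℝ) + (-1/2 : ℝ) * x ^ 2)) x := by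
    intro x
    have h0 := (Real.hasDerivAt_sin x).sub (((hasDerivAt_pow 1 x).const_mul (1 : ℝ)).add ((hasDerivAt_pow 3 x).const_mul (-1/6 : ℝ)))
    refine h0.congr_deriv ?_
    push_cast
    ring
  exact aux_nonneg _ _ hder (by norm_num) (fun z hz => lad_c2 z hz)

lemma lad_c4 : ∀ x : ℝ, 0 ≤ x → 0 ≤ ((1 : ℝ) + (-1/2 : ℝ) * x ^ 2 + (1/24 : ℝ) * x ^ 4) - Real.cos x := by
  have hder : ∀ x : ℝ, HasDerivAt (fun x : ℝ => ((1 : ℝ) + (-1/2 : ℝ) * x ^ 2 + (1/24 : ℝ) * x ^ 4) - Real.cos x) (Real.sin x - ((1 : ℝ) * x ^ 1 + (-1/6 : ℝ) * x ^ 3)) x := by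
    intro x
    have h0 := (((hasDerivAt_const x (1 : ℝ)).add ((hasDerivAt_pow 2 x).const_mul (-1/2 : ℝ))).add ((hasDerivAt_pow 4 x).const_mul (1/24 : ℝ))).sub (Real.hasDerivAt_cos x)
    refine h0.congr_deriv ?_
    push_cast
    ring
  exact aux_nonneg _ _ hder (by norm_num) (fun z hz => lad_s3 z hz)

lemma lad_s5 : ∀ x : ℝ, 0 ≤ x → 0 ≤ ((1 : ℝ) * x ^ 1 + (-1/6 : ℝ) * x ^ 3 + (1/120 : ℝ) * x ^ 5) - Real.sin x := by
  have hder : ∀ x : ℝ, HasDerivAt (fun x : ℝ => ((1 : ℝ) * x ^ 1 + (-1/6 : ℝ) * x ^ 3 + (1/120 : ℝ) * x ^ 5) - Real.sin x) (((1 : ℝ) + (-1/2 : ℝ) * x ^ 2 + (1/24 : ℝ) * x ^ 4) - Real.cos x) x := by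
    intro x
    have h0 := ((((hasDerivAt_pow 1 x).const_mul (1 : ℝ)).add ((hasDerivAt_pow 3 x).const_mul (-1/6 : ℝ))).add ((hasDerivAt_pow 5 x).const_mul (1/120 : ℝ))).sub (Real.hasDerivAt_sin x)
    refine h0.congr_deriv ?_
    push_cast
    ring
  exact aux_nonneg _ _ hder (by norm_num) (fun z hz => lad_c4 z hz)

lemma lad_c6 : ∀ x : ℝ, 0 ≤ x → 0 ≤ Real.cos x - ((1 : ℝ) + (-1/2 : ℝ) * x ^ 2 + (1/24 : ℝ) * x ^ 4 + (-1/720 : ℝ) * x ^ 6) := by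
  have hder : ∀ x : ℝ, HasDerivAt (fun x : ℝ => Real.cos x - ((1 : ℝ) + (-1/2 : ℝ) * x ^ 2 + (1/24 : ℝ) * x ^ 4 + (-1/720 : ℝ) * x ^ 6)) (((1 : ℝ) * x ^ 1 + (-1/6 : ℝ) * x ^ 3 + (1/120 : ℝ) * x ^ 5) - Real.sin x) x := by
    intro x
    have h0 := (Real.hasDerivAt_cos x).sub ((((hasDerivAt_const x (1 : ℝ)).add ((hasDerivAt_pow 2 x).const_mul (-1/2 : ℝ))).add ((hasDerivAt_pow 4 x).const_mul (1/24 : ℝ))).add ((hasDerivAt_pow 6 x).const_mul (-1/720 : ℝ)))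
    refine h0.congr_deriv ?_
    push_cast
    ring
  exact aux_nonneg _ _ hder (by norm_num) (fun z hz => lad_s5 z hz)

lemma lad_s7 : ∀ x : ℝ, 0 ≤ x → 0 ≤ Real.sin x - ((1 : ℝ) * x ^ 1 + (-1/6 : ℝ) * x ^ 3 + (1/120 : ℝ) * x ^ 5 + (-1/5040 : ℝ) * x ^ 7) := by
  have hder : ∀ x : ℝ, HasDerivAt (fun x : ℝ => Real.sin x - ((1 : ℝ) * x ^ 1 + (-1/6 : ℝ) * x ^ 3 + (1/120 : ℝ) * x ^ 5 + (-1/5040 : ℝ) * x ^ 7)) (Real.cos x - ((1 : ℝ) + (-1/2 : ℝ) * x ^ 2 + (1/24 : ℝ) * x ^ 4 + (-1/720 : ℝ) * x ^ 6)) x := by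
    intro x
    have h0 := (Real.hasDerivAt_sin x).sub (((((hasDerivAt_pow 1 x).const_mul (1 : ℝ)).add ((hasDerivAt_pow 3 x).const_mul (-1/6 : ℝ))).add ((hasDerivAt_pow 5 x).const_mul (1/120 : ℝ))).add ((hasDerivAt_pow 7 x).const_mul (-1/5040 : ℝ)))
    refine h0.congr_deriv ?_
    push_cast
    ring
  exact aux_nonneg _ _ hder (by norm_num) (fun z hz => lad_c6 z hz)

lemma lad_c8 : ∀ x : ℝ, 0 ≤ x → 0 ≤ ((1 : ℝ) + (-1/2 : ℝ) * x ^ 2 + (1/24 : ℝ) * x ^ 4 + (-1/720 : ℝ) * x ^ 6 + (1/40320 : ℝ) * x ^ 8) - Real.cos x := by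
  have hder : ∀ x : ℝ, HasDerivAt (fun x : ℝ => ((1 : ℝ) + (-1/2 : ℝ) * x ^ 2 + (1/24 : ℝ) * x ^ 4 + (-1/720 : ℝ) * x ^ 6 + (1/40320 : ℝ) * x ^ 8) - Real.cos x) (Real.sin x - ((1 : ℝ) * x ^ 1 + (-1/6 : ℝ) * x ^ 3 + (1/120 : ℝ) * x ^ 5 + (-1/5040 : ℝ) * x ^ 7)) x := by
    intro x
    have h0 := (((((hasDerivAt_const x (1 : ℝ)).add ((hasDerivAt_pow 2 x).const_mul (-1/2 : ℝ))).add ((hasDerivAt_pow 4 x).const_mul (1/24 : ℝ))).add ((hasDerivAt_pow 6 x).const_mul (-1/720 : ℝ))).add ((hasDerivAt_pow 8 x).const_mul (1/40320 : ℝ))).sub (Real.hasDerivAt_cos x)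
    refine h0.congr_deriv ?_
    push_cast
    ring
  exact aux_nonneg _ _ hder (by norm_num) (fun z hz => lad_s7 z hz)

lemma lad_s9 : ∀ x : ℝ, 0 ≤ x → 0 ≤ ((1 : ℝ) * x ^ 1 + (-1/6 : ℝ) * x ^ 3 + (1/120 : ℝ) * x ^ 5 + (-1/5040 : ℝ) * x ^ 7 + (1/362880 : ℝ) * x ^ 9) - Real.sin x := by
  have hder : ∀ x : ℝ, HasDerivAt (fun x : ℝ => ((1 : ℝ) * x ^ 1 + (-1/6 : ℝ) * x ^ 3 + (1/120 : ℝ) * x ^ 5 + (-1/5040 : ℝ) * x ^ 7 + (1/362880 : ℝ) * x ^ 9) - Real.sin x) (((1 : ℝ) + (-1/2 : ℝ) * x ^ 2 + (1/24 : ℝ) * x ^ 4 + (-1/720 : ℝ) * x ^ 6 + (1/40320 : ℝ) * x ^ 8) - Real.cos x) x := by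
    intro x
    have h0 := ((((((hasDerivAt_pow 1 x).const_mul (1 : ℝ)).add ((hasDerivAt_pow 3 x).const_mul (-1/6 : ℝ))).add ((hasDerivAt_pow 5 x).const_mul (1/120 : ℝ))).add ((hasDerivAt_pow 7 x).const_mul (-1/5040 : ℝ))).add ((hasDerivAt_pow 9 x).const_mul (1/362880 : ℝ))).sub (Real.hasDerivAt_sin x)
    refine h0.congr_deriv ?_
    push_cast
    ring
  exact aux_nonneg _ _ hder (by norm_num) (fun z hz => lad_c8 z hz)

lemma lad_c10 : ∀ x : ℝ, 0 ≤ x → 0 ≤ Real.cos x - ((1 : ℝ) + (-1/2 : ℝ) * x ^ 2 + (1/24 : ℝ) * x ^ 4 + (-1/720 : ℝ) * x ^ 6 + (1/40320 : ℝ) * x ^ 8 + (-1/3628800 : ℝ) * x ^ 10) := by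
  have hder : ∀ x : ℝ, HasDerivAt (fun x : ℝ => Real.cos x - ((1 : ℝ) + (-1/2 : ℝ) * x ^ 2 + (1/24 : ℝ) * x ^ 4 + (-1/720 : ℝ) * x ^ 6 + (1/40320 : ℝ) * x ^ 8 + (-1/3628800 : ℝ) * x ^ 10)) (((1 : ℝ) * x ^ 1 + (-1/6 : ℝ) * x ^ 3 + (1/120 : ℝ) * x ^ 5 + (-1/5040 : ℝ) * x ^ 7 + (1/362880 : ℝ) * x ^ 9) - Real.sin x) x := by
    intro x
    have h0 := (Real.hasDerivAt_cos x).sub ((((((hasDerivAt_const x (1 : ℝ)).add ((hasDerivAt_pow 2 x).const_mul (-1/2 : ℝ))).add ((hasDerivAt_pow 4 x).const_mul (1/24 : ℝ))).add ((hasDerivAt_pow 6 x).const_mul (-1/720 : ℝ))).add ((hasDerivAt_pow 8 x).const_mul (1/40320 : ℝ))).add ((hasDerivAt_pow 10 x).const_mul (-1/3628800 : ℝ)))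
    refine h0.congr_deriv ?_
    push_cast
    ring
  exact aux_nonneg _ _ hder (by norm_num) (fun z hz => lad_s9 z hz)

lemma lad_s11 : ∀ x : ℝ, 0 ≤ x → 0 ≤ Real.sin x - ((1 : ℝ) * x ^ 1 + (-1/6 : ℝ) * x ^ 3 + (1/120 : ℝ) * x ^ 5 + (-1/5040 : ℝ) * x ^ 7 + (1/362880 : ℝ) * x ^ 9 + (-1/39916800 : ℝ) * x ^ 11) := by
  have hder : ∀ x : ℝ, HasDerivAt (fun x : ℝ => Real.sin x - ((1 : ℝ) * x ^ 1 + (-1/6 : ℝ) * x ^ 3 + (1/120 : ℝ) * x ^ 5 + (-1/5040 : ℝ) * x ^ 7 + (1/362880 : ℝ) * x ^ 9 + (-1/39916800 : ℝ) * x ^ 11)) (Real.cos x - ((1 : ℝ) + (-1/2 : ℝ) * x ^ 2 + (1/24 : ℝ) * x ^ 4 + (-1/720 : ℝ) * x ^ 6 + (1/40320 : ℝ) * x ^ 8 + (-1/3628800 : ℝ) * x ^ 10)) x := by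
    intro x
    have h0 := (Real.hasDerivAt_sin x).sub (((((((hasDerivAt_pow 1 x).const_mul (1 : ℝ)).add ((hasDerivAt_pow 3 x).const_mul (-1/6 : ℝ))).add ((hasDerivAt_pow 5 x).const_mul (1/120 : ℝ))).add ((hasDerivAt_pow 7 x).const_mul (-1/5040 : ℝ))).add ((hasDerivAt_pow 9 x).const_mul (1/362880 : ℝ))).add ((hasDerivAt_pow 11 x).const_mul (-1/39916800 : ℝ)))
    refine h0.congr_deriv ?_
    push_cast
    ring
  exact aux_nonneg _ _ hder (by norm_num) (fun z hz => lad_c10 z hz)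

lemma lad_c12 : ∀ x : ℝ, 0 ≤ x → 0 ≤ ((1 : ℝ) + (-1/2 : ℝ) * x ^ 2 + (1/24 : ℝ) * x ^ 4 + (-1/720 : ℝ) * x ^ 6 + (1/40320 : ℝ) * x ^ 8 + (-1/3628800 : ℝ) * x ^ 10 + (1/479001600 : ℝ) * x ^ 12) - Real.cos x := by
  have hder : ∀ x : ℝ, HasDerivAt (fun x : ℝ => ((1 : ℝ) + (-1/2 : ℝ) * x ^ 2 + (1/24 : ℝ) * x ^ 4 + (-1/720 : ℝ) * x ^ 6 + (1/40320 : ℝ) * x ^ 8 + (-1/3628800 : ℝ) * x ^ 10 + (1/479001600 : ℝ) * x ^ 12) - Real.cos x) (Real.sin x - ((1 : ℝ) * x ^ 1 + (-1/6 : ℝ) * x ^ 3 + (1/120 : ℝ) * x ^ 5 + (-1/5040 : ℝ) * x ^ 7 + (1/362880 : ℝ) * x ^ 9 + (-1/39916800 : ℝ) * x ^ 11)) x := by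
    intro x
    have h0 := (((((((hasDerivAt_const x (1 : ℝ)).add ((hasDerivAt_pow 2 x).const_mul (-1/2 : ℝ))).add ((hasDerivAt_pow 4 x).const_mul (1/24 : ℝ))).add ((hasDerivAt_pow 6 x).const_mul (-1/720 : ℝ))).add ((hasDerivAt_pow 8 x).const_mul (1/40320 : ℝ))).add ((hasDerivAt_pow 10 x).const_mul (-1/3628800 : ℝ))).add ((hasDerivAt_pow 12 x).const_mul (1/479001600 : ℝ))).sub (Real.hasDerivAt_cos x)
    refine h0.congr_deriv ?_
    push_cast
    ring
  exact aux_nonneg _ _ hder (by norm_num) (fun z hz => lad_s11 z hz)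

lemma lad_s13 : ∀ x : ℝ, 0 ≤ x → 0 ≤ ((1 : ℝ) * x ^ 1 + (-1/6 : ℝ) * x ^ 3 + (1/120 : ℝ) * x ^ 5 + (-1/5040 : ℝ) * x ^ 7 + (1/362880 : ℝ) * x ^ 9 + (-1/39916800 : ℝ) * x ^ 11 + (1/6227020800 : ℝ) * x ^ 13) - Real.sin x := by
  have hder : ∀ x : ℝ, HasDerivAt (fun x : ℝ => ((1 : ℝ) * x ^ 1 + (-1/6 : ℝ) * x ^ 3 + (1/120 : ℝ) * x ^ 5 + (-1/5040 : ℝ) * x ^ 7 + (1/362880 : ℝ) * x ^ 9 + (-1/39916800 : ℝ) * x ^ 11 + (1/6227020800 : ℝ) * x ^ 13) - Real.sin x) (((1 : ℝ) + (-1/2 : ℝ) * x ^ 2 + (1/24 : ℝ) * x ^ 4 + (-1/720 : ℝ) * x ^ 6 + (1/40320 : ℝ) * x ^ 8 + (-1/3628800 : ℝ) * x ^ 10 + (1/479001600 : ℝ) * x ^ 12) - Real.cos x) x := by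
    intro x
    have h0 := ((((((((hasDerivAt_pow 1 x).const_mul (1 : ℝ)).add ((hasDerivAt_pow 3 x).const_mul (-1/6 : ℝ))).add ((hasDerivAt_pow 5 x).const_mul (1/120 : ℝ))).add ((hasDerivAt_pow 7 x).const_mul (-1/5040 : ℝ))).add ((hasDerivAt_pow 9 x).const_mul (1/362880 : ℝ))).add ((hasDerivAt_pow 11 x).const_mul (-1/39916800 : ℝ))).add ((hasDerivAt_pow 13 x).const_mul (1/6227020800 : ℝ))).sub (Real.hasDerivAt_sin x)
    refine h0.congr_deriv ?_
    push_cast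
    ring
  exact aux_nonneg _ _ hder (by norm_num) (fun z hz => lad_c12 z hz)

lemma lad_c14 : ∀ x : ℝ, 0 ≤ x → 0 ≤ Real.cos x - ((1 : ℝ) + (-1/2 : ℝ) * x ^ 2 + (1/24 : ℝ) * x ^ 4 + (-1/720 : ℝ) * x ^ 6 + (1/40320 : ℝ) * x ^ 8 + (-1/3628800 : ℝ) * x ^ 10 + (1/479001600 : ℝ) * x ^ 12 + (-1/87178291200 : ℝ) * x ^ 14) := by
  have hder : ∀ x : ℝ, HasDerivAt (fun x : ℝ => Real.cos x - ((1 : ℝ) + (-1/2 : ℝ) * x ^ 2 + (1/24 : ℝ) * x ^ 4 + (-1/720 : ℝ) * x ^ 6 + (1/40320 : ℝ) * x ^ 8 + (-1/3628800 : ℝ) * x ^ 10 + (1/479001600 : ℝ) * x ^ 12 + (-1/87178291200 : ℝ) * x ^ 14)) (((1 : ℝ) * x ^ 1 + (-1/6 : ℝ) * x ^ 3 + (1/120 : ℝ) * x ^ 5 + (-1/5040 : ℝ) * x ^ 7 + (1/362880 : ℝ) * x ^ 9 + (-1/39916800 : ℝ) * x ^ 11 + (1/6227020800 : ℝ) * x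 ^ 13) - Real.sin x) x := by
    intro x
    have h0 := (Real.hasDerivAt_cos x).sub ((((((((hasDerivAt_const x (1 : ℝ)).add ((hasDerivAt_pow 2 x).const_mul (-1/2 : ℝ))).add ((hasDerivAt_pow 4 x).const_mul (1/24 : ℝ))).add ((hasDerivAt_pow 6 x).const_mul (-1/720 : ℝ))).add ((hasDerivAt_pow 8 x).const_mul (1/40320 : ℝ))).add ((hasDerivAt_pow 10 x).const_mul (-1/3628800 : ℝ))).add ((hasDerivAt_pow 12 x).const_mul (1/479001600 : ℝ))).add ((hasDerivAt_pow 14 x).const_mul (-1/87178291200 : ℝ)))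
    refine h0.congr_deriv ?_
    push_cast
    ring
  exact aux_nonneg _ _ hder (by norm_num) (fun z hz => lad_s13 z hz)

lemma regQs (v : ℝ) (hlo : (0 : ℝ) ≤ v) (hhi : v ≤ (4 : ℝ)) :
    0 ≤ (1 : ℝ) + (-1/6 : ℝ) * v ^ 1 + (1/120 : ℝ) * v ^ 2 + (-1/5040 : ℝ) * v ^ 3 + (1/362880 : ℝ) * v ^ 4 + (-1/39916800 : ℝ) * v ^ 5 := by
  have hd : |v - (2 : ℝ)| ≤ (2 : ℝ) := by rw [abs_le]; constructor <;> linarith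
  have hb := abs_poly14_le (v - (2 : ℝ)) (2 : ℝ) hd (-67673/498960 : ℝ) (67673/498960 : ℝ) (by norm_num [abs_le]) (899/124740 : ℝ) (899/124740 : ℝ) (by norm_num [abs_le]) (-59/332640 : ℝ) (59/332640 : ℝ) (by norm_num [abs_le]) (1/399168 : ℝ) (1/399168 : ℝ) (by norm_num [abs_le]) (-1/39916800 : ℝ) (1/39916800 : ℝ) (by norm_num [abs_le]) (0 : ℝ) (0 : ℝ) (by norm_num [abs_le]) (0 : ℝ) (0 : ℝ) (by norm_num [abs_le]) (0 : ℝ) (0 : ℝ) (by norm_num [abs_le]) (0 : ℝ) (0 : ℝ) (by norm_num [abs_le]) (0 : ℝ) (0 : ℝ) (by norm_num [abs_le]) (0 : ℝ) (0 : ℝ) (by norm_num [abs_le]) (0 : ℝ) (0 : ℝ) (by norm_num [abs_le]) (0 : ℝ) (0 : ℝ) (by norm_num [abs_le]) (0 : ℝ) (0 : ℝ) (by norm_num [abs_le])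
  have hlow := (abs_le.mp hb).1
  have hid : (1 : ℝ) + (-1/6 : ℝ) * v ^ 1 + (1/120 : ℝ) * v ^ 2 + (-1/5040 : ℝ) * v ^ 3 + (1/362880 : ℝ) * v ^ 4 + (-1/39916800 : ℝ) * v ^ 5 = (48403/69300 : ℝ) + ((-67673/498960 : ℝ) * (v - (2 : ℝ)) ^ 1 + ((899/124740 : ℝ) * (v - (2 : ℝ)) ^ 2 + ((-59/332640 : ℝ) * (v - (2 : ℝ)) ^ 3 + ((1/399168 : ℝ) * (v - (2 : ℝ)) ^ 4 + ((-1/39916800 : ℝ) * (v - (2 : ℝ)) ^ 5 + ((0 : ℝ) * (v - (2 : ℝ)) ^ 6 + ((0 : ℝ) * (v - (2 : ℝ)) ^ 7 + ((0 : ℝ) * (v - (2 : ℝ)) ^ 8 + ((0 : ℝ) * (v - (2 : ℝ)) ^ 9 + ((0 : ℝ) * (v - (2 : ℝ)) ^ 10 + ((0 : ℝ) * (v - (2 : ℝ)) ^ 11 + ((0 : ℝ) * (v - (2 : ℝ)) ^ 12 + ((0 : ℝ) * (v - (2 : ℝ)) ^ 13 + ((0 : ℝ) * (v - (2 : ℝ))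 ^ 14)))))))))))))) := by ring
  have hnum : (67673/498960 : ℝ) * (2 : ℝ) ^ 1 + ((899/124740 : ℝ) * (2 : ℝ) ^ 2 + ((59/332640 : ℝ) * (2 : ℝ) ^ 3 + ((1/399168 : ℝ) * (2 : ℝ) ^ 4 + ((1/39916800 : ℝ) * (2 : ℝ) ^ 5 + ((0 : ℝ) * (2 : ℝ) ^ 6 + ((0 : ℝ) * (2 : ℝ) ^ 7 + ((0 : ℝ) * (2 : ℝ) ^ 8 + ((0 : ℝ) * (2 : ℝ) ^ 9 + ((0 : ℝ) * (2 : ℝ) ^ 10 + ((0 : ℝ) * (2 : ℝ) ^ 11 + ((0 : ℝ) * (2 : ℝ) ^ 12 + ((0 : ℝ) * (2 : ℝ) ^ 13 + ((0 : ℝ) * (2 : ℝ) ^ 14))))))))))))) ≤ (48403/69300 : ℝ) := by norm_num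
  linarith

lemma regFA (v : ℝ) (hlo : (0 : ℝ) ≤ v) (hhi : v ≤ (4 : ℝ)) :
    0 ≤ (15629/312500 : ℝ) + (-101337/5000000 : ℝ) * v ^ 1 + (2162033/900000000 : ℝ) * v ^ 2 + (-929011/12600000000 : ℝ) * v ^ 3 + (50191/43200000000 : ℝ) * v ^ 4 + (-3412033/299376000000000 : ℝ) * v ^ 5 + (-1/43589145600 : ℝ) * v ^ 6 := by
  rcases le_or_gt v (2 : ℝ) with hc0 | hc0
  · have hd : |v - (1 : ℝ)| ≤ (1 : ℝ) := by rw [abs_le]; constructor <;> linarith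
    have hb := abs_poly14_le (v - (1 : ℝ)) (1 : ℝ) hd (-85431920011507/5448643200000000 : ℝ) (85431920011507/5448643200000000 : ℝ) (by norm_num [abs_le]) (5960604390359/2724321600000000 : ℝ) (5960604390359/2724321600000000 : ℝ) (by norm_num [abs_le]) (-62839335749/908107200000000 : ℝ) (62839335749/908107200000000 : ℝ) (by norm_num [abs_le]) (547092733/495331200000000 : ℝ) (547092733/495331200000000 : ℝ) (by norm_num [abs_le]) (-314245003/27243216000000000 : ℝ) (314245003/27243216000000000 : ℝ) (by norm_num [abs_le]) (-1/43589145600 : ℝ) (1/43589145600 : ℝ) (by norm_num [abs_le]) (0 : ℝ) (0 : ℝ) (by norm_num [abs_le]) (0 : ℝ) (0 : ℝ) (by norm_num [abs_le]) (0 : ℝ) (0 : ℝ) (by norm_num [abs_le]) (0 : ℝ) (0 : ℝ) (by norm_num [abs_le]) (0 : ℝ) (0 : ℝ) (by norm_num [abs_le]) (0 : ℝ) (0 : ℝ) (by norm_num [abs_le]) (0 : ℝ) (0 : ℝ) (by norm_num [abs_le]) (0 : ℝ) (0 : ℝ) (by norm_num [abs_le])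
    have hlow := (abs_le.mp hb).1
    have hid : (15629/312500 : ℝ) + (-101337/5000000 : ℝ) * v ^ 1 + (2162033/900000000 : ℝ) * v ^ 2 + (-929011/12600000000 : ℝ) * v ^ 3 + (50191/43200000000 : ℝ) * v ^ 4 + (-3412033/299376000000000 : ℝ) * v ^ 5 + (-1/43589145600 : ℝ) * v ^ 6 = (873828285410887/27243216000000000 : ℝ) + ((-85431920011507/5448643200000000 : ℝ) * (v - (1 : ℝ)) ^ 1 + ((5960604390359/2724321600000000 : ℝ) * (v - (1 : ℝ)) ^ 2 + ((-62839335749/908107200000000 : ℝ) * (v - (1 : ℝ)) ^ 3 + ((547092733/495331200000000 : ℝ) * (v - (1 : ℝ)) ^ 4 + ((-314245003/27243216000000000 : ℝ) * (v - (1 : ℝ)) ^ 5 + ((-1/43589145600 : ℝ) * (v - (1 : ℝ)) ^ 6 + ((0 : ℝ) * (v - (1 : ℝ)) ^ 7 + ((0 : ℝ) * (v - (1 : ℝ)) ^ 8 + ((0 : ℝ) * (v - (1 : ℝ)) ^ 9 + ((0 : ℝ) * (v - (1 : ℝ)) ^ 10 + ((0 : ℝ) * (v - (1 : ℝ)) ^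 11 + ((0 : ℝ) * (v - (1 : ℝ)) ^ 12 + ((0 : ℝ) * (v - (1 : ℝ)) ^ 13 + ((0 : ℝ) * (v - (1 : ℝ)) ^ 14)))))))))))))) := by ring
    have hnum : (85431920011507/5448643200000000 : ℝ) * (1 : ℝ) ^ 1 + ((5960604390359/2724321600000000 : ℝ) * (1 : ℝ) ^ 2 + ((62839335749/908107200000000 : ℝ) * (1 : ℝ) ^ 3 + ((547092733/495331200000000 : ℝ) * (1 : ℝ) ^ 4 + ((314245003/27243216000000000 : ℝ) * (1 : ℝ) ^ 5 + ((1/43589145600 : ℝ) * (1 : ℝ) ^ 6 + ((0 : ℝ) * (1 : ℝ) ^ 7 + ((0 : ℝ) * (1 : ℝ) ^ 8 + ((0 : ℝ) * (1 : ℝ) ^ 9 + ((0 : ℝ) * (1 : ℝ) ^ 10 + ((0 : ℝ) * (1 : ℝ) ^ 11 + ((0 : ℝ) * (1 : ℝ) ^ 12 + ((0 : ℝ) * (1 : ℝ) ^ 13 + ((0 : ℝ) * (1 : ℝ) ^ 14))))))))))))) ≤ (873828285410887/27243216000000000 : ℝ) := by norm_num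
    linarith
  rcases le_or_gt v (3 : ℝ) with hc1 | hc1
  · have hd : |v - (5/2 : ℝ)| ≤ (1/2 : ℝ) := by rw [abs_le]; constructor <;> linarith
    have hb := abs_poly14_le (v - (5/2 : ℝ)) (1/2 : ℝ) hd (-15166149834757/1585059840000000 : ℝ) (15166149834757/1585059840000000 : ℝ) (by norm_num [abs_le]) (41214637361551/21794572800000000 : ℝ) (41214637361551/21794572800000000 : ℝ) (by norm_num [abs_le]) (-8453097139/134534400000000 : ℝ) (8453097139/134534400000000 : ℝ) (by norm_num [abs_le]) (11084867617/10897286400000000 : ℝ) (11084867617/10897286400000000 : ℝ) (by norm_num [abs_le]) (-319870003/27243216000000000 : ℝ) (319870003/27243216000000000 : ℝ) (by norm_num [abs_le]) (-1/43589145600 : ℝ) (1/43589145600 : ℝ) (by norm_num [abs_le]) (0 : ℝ) (0 : ℝ) (by norm_num [abs_le]) (0 : ℝ) (0 : ℝ) (by norm_num [abs_le]) (0 : ℝ) (0 : ℝ) (by norm_num [abs_le]) (0 : ℝ) (0 : ℝ) (by norm_num [abs_le]) (0 : ℝ) (0 : ℝ) (by norm_num [abs_le]) (0 : ℝ) (0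 : ℝ) (by norm_num [abs_le]) (0 : ℝ) (0 : ℝ) (by norm_num [abs_le]) (0 : ℝ) (0 : ℝ) (by norm_num [abs_le])
    have hlow := (abs_le.mp hb).1
    have hid : (15629/312500 : ℝ) + (-101337/5000000 : ℝ) * v ^ 1 + (2162033/900000000 : ℝ) * v ^ 2 + (-929011/12600000000 : ℝ) * v ^ 3 + (50191/43200000000 : ℝ) * v ^ 4 + (-3412033/299376000000000 : ℝ) * v ^ 5 + (-1/43589145600 : ℝ) * v ^ 6 = (462067122020849/34871316480000000 : ℝ) + ((-15166149834757/1585059840000000 : ℝ) * (v - (5/2 : ℝ)) ^ 1 + ((41214637361551/21794572800000000 : ℝ) * (v - (5/2 : ℝ)) ^ 2 + ((-8453097139/134534400000000 : ℝ) * (v - (5/2 : ℝ)) ^ 3 + ((11084867617/10897286400000000 : ℝ) * (v - (5/2 : ℝ)) ^ 4 + ((-319870003/27243216000000000 : ℝ) * (v - (5/2 : ℝ)) ^ 5 + ((-1/43589145600 : ℝ) * (v - (5/2 : ℝ)) ^ 6 + ((0 : ℝ) * (v - (5/2 : ℝ)) ^ 7 + ((0 : ℝ) * (v - (5/2 : ℝ))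 ^ 8 + ((0 : ℝ) * (v - (5/2 : ℝ)) ^ 9 + ((0 : ℝ) * (v - (5/2 : ℝ)) ^ 10 + ((0 : ℝ) * (v - (5/2 : ℝ)) ^ 11 + ((0 : ℝ) * (v - (5/2 : ℝ)) ^ 12 + ((0 : ℝ) * (v - (5/2 : ℝ)) ^ 13 + ((0 : ℝ) * (v - (5/2 : ℝ)) ^ 14)))))))))))))) := by ring
    have hnum : (15166149834757/1585059840000000 : ℝ) * (1/2 : ℝ) ^ 1 + ((41214637361551/21794572800000000 : ℝ) * (1/2 : ℝ) ^ 2 + ((8453097139/134534400000000 : ℝ) * (1/2 : ℝ) ^ 3 + ((11084867617/10897286400000000 : ℝ) * (1/2 : ℝ) ^ 4 + ((319870003/27243216000000000 : ℝ) * (1/2 : ℝ) ^ 5 + ((1/43589145600 : ℝ) * (1/2 : ℝ) ^ 6 + ((0 : ℝ) * (1/2 : ℝ) ^ 7 + ((0 : ℝ) * (1/2 : ℝ) ^ 8 + ((0 : ℝ) * (1/2 : ℝ) ^ 9 + ((0 : ℝ) * (1/2 : ℝ) ^ 10 + ((0 : ℝ) * (1/2 : ℝ) ^ 11 + ((0 :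 ℝ) * (1/2 : ℝ) ^ 12 + ((0 : ℝ) * (1/2 : ℝ) ^ 13 + ((0 : ℝ) * (1/2 : ℝ) ^ 14))))))))))))) ≤ (462067122020849/34871316480000000 : ℝ) := by norm_num
    linarith
  have hd : |v - (7/2 : ℝ)| ≤ (1/2 : ℝ) := by rw [abs_le]; constructor <;> linarith
  have hb := abs_poly14_le (v - (7/2 : ℝ)) (1/2 : ℝ) hd (-10622538306403/1779148800000000 : ℝ) (10622538306403/1779148800000000 : ℝ) (by norm_num [abs_le]) (759936410273/444787200000000 : ℝ) (759936410273/444787200000000 : ℝ) (by norm_num [abs_le]) (-91663696829/1556755200000000 : ℝ) (91663696829/1556755200000000 : ℝ) (by norm_num [abs_le]) (213089339/222393600000000 : ℝ) (213089339/222393600000000 : ℝ) (by norm_num [abs_le]) (-46231429/3891888000000000 : ℝ) (46231429/3891888000000000 : ℝ) (by norm_num [abs_le]) (-1/43589145600 : ℝ) (1/43589145600 : ℝ) (by norm_num [abs_le]) (0 : ℝ) (0 : ℝ) (by norm_num [abs_le]) (0 : ℝ) (0 : ℝ) (by norm_num [abs_le]) (0 : ℝ) (0 : ℝ) (by norm_num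 [abs_le]) (0 : ℝ) (0 : ℝ) (by norm_num [abs_le]) (0 : ℝ) (0 : ℝ) (by norm_num [abs_le]) (0 : ℝ) (0 : ℝ) (by norm_num [abs_le]) (0 : ℝ) (0 : ℝ) (by norm_num [abs_le]) (0 : ℝ) (0 : ℝ) (by norm_num [abs_le])
  have hlow := (abs_le.mp hb).1
  have hid : (15629/312500 : ℝ) + (-101337/5000000 : ℝ) * v ^ 1 + (2162033/900000000 : ℝ) * v ^ 2 + (-929011/12600000000 : ℝ) * v ^ 3 + (50191/43200000000 : ℝ) * v ^ 4 + (-3412033/299376000000000 : ℝ) * v ^ 5 + (-1/43589145600 : ℝ) * v ^ 6 = (32686949659697/5930496000000000 : ℝ) + ((-10622538306403/1779148800000000 : ℝ) * (v - (7/2 : ℝ)) ^ 1 + ((759936410273/444787200000000 : ℝ) * (v - (7/2 : ℝ)) ^ 2 + ((-91663696829/1556755200000000 : ℝ) * (v - (7/2 : ℝ)) ^ 3 + ((213089339/222393600000000 : ℝ) * (v - (7/2 : ℝ)) ^ 4 + ((-46231429/3891888000000000 : ℝ) * (v - (7/2 : ℝ)) ^ 5 + ((-1/43589145600 : ℝ)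 * (v - (7/2 : ℝ)) ^ 6 + ((0 : ℝ) * (v - (7/2 : ℝ)) ^ 7 + ((0 : ℝ) * (v - (7/2 : ℝ)) ^ 8 + ((0 : ℝ) * (v - (7/2 : ℝ)) ^ 9 + ((0 : ℝ) * (v - (7/2 : ℝ)) ^ 10 + ((0 : ℝ) * (v - (7/2 : ℝ)) ^ 11 + ((0 : ℝ) * (v - (7/2 : ℝ)) ^ 12 + ((0 : ℝ) * (v - (7/2 : ℝ)) ^ 13 + ((0 : ℝ) * (v - (7/2 : ℝ)) ^ 14)))))))))))))) := by ring
  have hnum : (10622538306403/1779148800000000 : ℝ) * (1/2 : ℝ) ^ 1 + ((759936410273/444787200000000 : ℝ) * (1/2 : ℝ) ^ 2 + ((91663696829/1556755200000000 : ℝ) * (1/2 : ℝ) ^ 3 + ((213089339/222393600000000 : ℝ) * (1/2 : ℝ) ^ 4 + ((46231429/3891888000000000 : ℝ) * (1/2 : ℝ) ^ 5 + ((1/43589145600 : ℝ) * (1/2 : ℝ) ^ 6 + ((0 : ℝ) * (1/2 : ℝ) ^ 7 + ((0 : ℝ) * (1/2 : ℝ) ^ 8 + ((0 : ℝ) * (1/2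 : ℝ) ^ 9 + ((0 : ℝ) * (1/2 : ℝ) ^ 10 + ((0 : ℝ) * (1/2 : ℝ) ^ 11 + ((0 : ℝ) * (1/2 : ℝ) ^ 12 + ((0 : ℝ) * (1/2 : ℝ) ^ 13 + ((0 : ℝ) * (1/2 : ℝ) ^ 14))))))))))))) ≤ (32686949659697/5930496000000000 : ℝ) := by norm_num
  linarith

lemma regG (v : ℝ) (hlo : (2 : ℝ) ≤ v) (hhi : v ≤ (14/5 : ℝ)) :
    0 ≤ (250741/5000000 : ℝ) + (-608699/5000000 : ℝ) * v ^ 2 + (4326097/120000000 : ℝ) * v ^ 4 + (-1858699/900000000 : ℝ) * v ^ 6 + (2108699/40320000000 : ℝ) * v ^ 8 + (-6826097/9072000000000 : ℝ) * v ^ 10 + (16760893/2395008000000000 : ℝ) * v ^ 12 + (-1163/23296000000000 : ℝ) * v ^ 14 := by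
  rcases le_or_gt v (9/4 : ℝ) with hc0 | hc0
  · have hd : |v - (17/8 : ℝ)| ≤ (1/8 : ℝ) := by rw [abs_le]; constructor <;> linarith
    have hb := abs_poly14_le (v - (17/8 : ℝ)) (1/8 : ℝ) hd (462097047225510520925690333/1141113629333834956800000000 : ℝ) (462097047225510520925690333/1141113629333834956800000000 : ℝ) (by norm_num [abs_le]) (491504240923277663738053/1424967069597696000000000 : ℝ) (491504240923277663738053/1424967069597696000000000 : ℝ) (by norm_num [abs_le]) (19275118873776111671321/935134639423488000000000 : ℝ) (19275118873776111671321/935134639423488000000000 : ℝ) (by norm_num [abs_le]) (-2202178570036507050613/51951924412416000000000 : ℝ) (2202178570036507050613/51951924412416000000000 : ℝ) (by norm_num [abs_le]) (-17689815334728103589/3246995275776000000000 : ℝ) (17689815334728103589/3246995275776000000000 : ℝ) (by norm_num [abs_le]) (25861310972388077/13915694039040000000 : ℝ) (25861310972388077/13915694039040000000 : ℝ) (by norm_num [abs_le]) (2908437716189639/12683575296000000000 : ℝ) (2908437716189639/12683575296000000000 : ℝ) (by norm_num [abs_le]) (-555102609774239/12683575296000000000 : ℝ) (555102609774239/12683575296000000000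 : ℝ) (by norm_num [abs_le]) (-5652811829963/1019215872000000000 : ℝ) (5652811829963/1019215872000000000 : ℝ) (by norm_num [abs_le]) (186852299969/594542592000000000 : ℝ) (186852299969/594542592000000000 : ℝ) (by norm_num [abs_le]) (166922813/40874803200000000 : ℝ) (166922813/40874803200000000 : ℝ) (by norm_num [abs_le]) (-4143503773/306561024000000000 : ℝ) (4143503773/306561024000000000 : ℝ) (by norm_num [abs_le]) (-19771/13312000000000 : ℝ) (19771/13312000000000 : ℝ) (by norm_num [abs_le]) (-1163/23296000000000 : ℝ) (1163/23296000000000 : ℝ) (by norm_num [abs_le])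
    have hlow := (abs_le.mp hb).1
    have hid : (250741/5000000 : ℝ) + (-608699/5000000 : ℝ) * v ^ 2 + (4326097/120000000 : ℝ) * v ^ 4 + (-1858699/900000000 : ℝ) * v ^ 6 + (2108699/40320000000 : ℝ) * v ^ 8 + (-6826097/9072000000000 : ℝ) * v ^ 10 + (16760893/2395008000000000 : ℝ) * v ^ 12 + (-1163/23296000000000 : ℝ) * v ^ 14 = (2572544667208179051680754707/39123895862874341376000000000 : ℝ) + ((462097047225510520925690333/1141113629333834956800000000 : ℝ) * (v - (17/8 : ℝ)) ^ 1 + ((491504240923277663738053/1424967069597696000000000 : ℝ) * (v - (17/8 : ℝ)) ^ 2 + ((19275118873776111671321/935134639423488000000000 : ℝ) * (v - (17/8 : ℝ)) ^ 3 + ((-2202178570036507050613/51951924412416000000000 : ℝ) * (v - (17/8 : ℝ)) ^ 4 + ((-17689815334728103589/3246995275776000000000 : ℝ) * (v - (17/8 : ℝ)) ^ 5 + ((25861310972388077/13915694039040000000 : ℝ) * (v - (17/8 : ℝ)) ^ 6 + ((2908437716189639/12683575296000000000 : ℝ) * (v - (17/8 : ℝ)) ^ 7 + ((-555102609774239/12683575296000000000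 : ℝ) * (v - (17/8 : ℝ)) ^ 8 + ((-5652811829963/1019215872000000000 : ℝ) * (v - (17/8 : ℝ)) ^ 9 + ((186852299969/594542592000000000 : ℝ) * (v - (17/8 : ℝ)) ^ 10 + ((166922813/40874803200000000 : ℝ) * (v - (17/8 : ℝ)) ^ 11 + ((-4143503773/306561024000000000 : ℝ) * (v - (17/8 : ℝ)) ^ 12 + ((-19771/13312000000000 : ℝ) * (v - (17/8 : ℝ)) ^ 13 + ((-1163/23296000000000 : ℝ) * (v - (17/8 : ℝ)) ^ 14)))))))))))))) := by ring
    have hnum : (462097047225510520925690333/1141113629333834956800000000 : ℝ) * (1/8 : ℝ) ^ 1 + ((491504240923277663738053/1424967069597696000000000 : ℝ) * (1/8 : ℝ) ^ 2 + ((19275118873776111671321/935134639423488000000000 : ℝ) * (1/8 : ℝ) ^ 3 + ((2202178570036507050613/51951924412416000000000 : ℝ) * (1/8 : ℝ) ^ 4 + ((17689815334728103589/3246995275776000000000 : ℝ) * (1/8 : ℝ) ^ 5 + ((25861310972388077/13915694039040000000 : ℝ) * (1/8 : ℝ) ^ 6 + ((2908437716189639/12683575296000000000 : ℝ) * (1/8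 : ℝ) ^ 7 + ((555102609774239/12683575296000000000 : ℝ) * (1/8 : ℝ) ^ 8 + ((5652811829963/1019215872000000000 : ℝ) * (1/8 : ℝ) ^ 9 + ((186852299969/594542592000000000 : ℝ) * (1/8 : ℝ) ^ 10 + ((166922813/40874803200000000 : ℝ) * (1/8 : ℝ) ^ 11 + ((4143503773/306561024000000000 : ℝ) * (1/8 : ℝ) ^ 12 + ((19771/13312000000000 : ℝ) * (1/8 : ℝ) ^ 13 + ((1163/23296000000000 : ℝ) * (1/8 : ℝ) ^ 14))))))))))))) ≤ (2572544667208179051680754707/39123895862874341376000000000 : ℝ) := by norm_num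
    linarith
  have hd : |v - (101/40 : ℝ)| ≤ (11/40 : ℝ) := by rw [abs_le]; constructor <;> linarith
  have hb := abs_poly14_le (v - (101/40 : ℝ)) (11/40 : ℝ) hd (4731584621326372348569046917777703669/6964804866539520000000000000000000000 : ℝ) (4731584621326372348569046917777703669/6964804866539520000000000000000000000 : ℝ) (by norm_num [abs_le]) (794463632614307701761761584690579/2435246456832000000000000000000000 : ℝ) (794463632614307701761761584690579/2435246456832000000000000000000000 : ℝ) (by norm_num [abs_le]) (-2436897856494753009915645029563/45660871065600000000000000000000 : ℝ) (2436897856494753009915645029563/45660871065600000000000000000000 : ℝ) (by norm_num [abs_le]) (-24553541047985981516818656877/507343011840000000000000000000 : ℝ) (24553541047985981516818656877/507343011840000000000000000000 : ℝ) (by norm_num [abs_le]) (-2481561603715056268556777/6341787648000000000000000000 : ℝ) (2481561603715056268556777/6341787648000000000000000000 : ℝ) (by norm_num [abs_le]) (309332832789207854282501/135895449600000000000000000 : ℝ) (309332832789207854282501/135895449600000000000000000 : ℝ) (by norm_num [abs_le]) (59096951353287728267/990904320000000000000000 : ℝ) (59096951353287728267/990904320000000000000000 : ℝ) (by norm_num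 [abs_le]) (-12211398920911394231/198180864000000000000000 : ℝ) (12211398920911394231/198180864000000000000000 : ℝ) (by norm_num [abs_le]) (-99698051896931393/22295347200000000000000 : ℝ) (99698051896931393/22295347200000000000000 : ℝ) (by norm_num [abs_le]) (59845681069169/371589120000000000000 : ℝ) (59845681069169/371589120000000000000 : ℝ) (by norm_num [abs_le]) (-2056302655331/25546752000000000000 : ℝ) (2056302655331/25546752000000000000 : ℝ) (by norm_num [abs_le]) (-168348011893/7664025600000000000 : ℝ) (168348011893/7664025600000000000 : ℝ) (by norm_num [abs_le]) (-117463/66560000000000 : ℝ) (117463/66560000000000 : ℝ) (by norm_num [abs_le]) (-1163/23296000000000 : ℝ) (1163/23296000000000 : ℝ) (by norm_num [abs_le])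
  have hlow := (abs_le.mp hb).1
  have hid : (250741/5000000 : ℝ) + (-608699/5000000 : ℝ) * v ^ 2 + (4326097/120000000 : ℝ) * v ^ 4 + (-1858699/900000000 : ℝ) * v ^ 6 + (2108699/40320000000 : ℝ) * v ^ 8 + (-6826097/9072000000000 : ℝ) * v ^ 10 + (16760893/2395008000000000 : ℝ) * v ^ 12 + (-1163/23296000000000 : ℝ) * v ^ 14 = (473231388948193877034868389586443851501/1671553167969484800000000000000000000000 : ℝ) + ((4731584621326372348569046917777703669/6964804866539520000000000000000000000 : ℝ) * (v - (101/40 : ℝ)) ^ 1 + ((794463632614307701761761584690579/2435246456832000000000000000000000 : ℝ) * (v - (101/40 : ℝ)) ^ 2 + ((-2436897856494753009915645029563/45660871065600000000000000000000 : ℝ) * (v - (101/40 : ℝ)) ^ 3 + ((-24553541047985981516818656877/507343011840000000000000000000 : ℝ) * (v - (101/40 : ℝ)) ^ 4 + ((-2481561603715056268556777/6341787648000000000000000000 : ℝ) * (v - (101/40 : ℝ)) ^ 5 + ((309332832789207854282501/135895449600000000000000000 : ℝ) * (v - (101/40 : ℝ)) ^ 6 + ((59096951353287728267/990904320000000000000000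 : ℝ) * (v - (101/40 : ℝ)) ^ 7 + ((-12211398920911394231/198180864000000000000000 : ℝ) * (v - (101/40 : ℝ)) ^ 8 + ((-99698051896931393/22295347200000000000000 : ℝ) * (v - (101/40 : ℝ)) ^ 9 + ((59845681069169/371589120000000000000 : ℝ) * (v - (101/40 : ℝ)) ^ 10 + ((-2056302655331/25546752000000000000 : ℝ) * (v - (101/40 : ℝ)) ^ 11 + ((-168348011893/7664025600000000000 : ℝ) * (v - (101/40 : ℝ)) ^ 12 + ((-117463/66560000000000 : ℝ) * (v - (101/40 : ℝ)) ^ 13 + ((-1163/23296000000000 : ℝ) * (v - (101/40 : ℝ)) ^ 14)))))))))))))) := by ring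
  have hnum : (4731584621326372348569046917777703669/6964804866539520000000000000000000000 : ℝ) * (11/40 : ℝ) ^ 1 + ((794463632614307701761761584690579/2435246456832000000000000000000000 : ℝ) * (11/40 : ℝ) ^ 2 + ((2436897856494753009915645029563/45660871065600000000000000000000 : ℝ) * (11/40 : ℝ) ^ 3 + ((24553541047985981516818656877/507343011840000000000000000000 : ℝ) * (11/40 : ℝ) ^ 4 + ((2481561603715056268556777/6341787648000000000000000000 : ℝ) * (11/40 : ℝ) ^ 5 + ((309332832789207854282501/135895449600000000000000000 : ℝ) * (11/40 : ℝ) ^ 6 + ((59096951353287728267/990904320000000000000000 : ℝ) * (11/40 : ℝ) ^ 7 + ((12211398920911394231/198180864000000000000000 : ℝ) * (11/40 : ℝ) ^ 8 + ((99698051896931393/22295347200000000000000 : ℝ) * (11/40 : ℝ) ^ 9 + ((59845681069169/371589120000000000000 : ℝ) * (11/40 : ℝ) ^ 10 + ((2056302655331/25546752000000000000 : ℝ) * (11/40 : ℝ) ^ 11 + ((168348011893/7664025600000000000 : ℝ) * (11/40 : ℝ) ^ 12 + ((117463/66560000000000 : ℝ) * (11/40 : ℝ) ^ 13 + ((1163/23296000000000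 : ℝ) * (11/40 : ℝ) ^ 14))))))))))))) ≤ (473231388948193877034868389586443851501/1671553167969484800000000000000000000000 : ℝ) := by norm_num
  linarith

lemma regPc12 (v : ℝ) (hlo : (2 : ℝ) ≤ v) (hhi : v ≤ (14/5 : ℝ)) :
    0 ≤ (-1 : ℝ) + (1/2 : ℝ) * v ^ 2 + (-1/24 : ℝ) * v ^ 4 + (1/720 : ℝ) * v ^ 6 + (-1/40320 : ℝ) * v ^ 8 + (1/3628800 : ℝ) * v ^ 10 + (-1/479001600 : ℝ) * v ^ 12 := by
  have hd : |v - (12/5 : ℝ)| ≤ (2/5 : ℝ) := by rw [abs_le]; constructor <;> linarith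
  have hb := abs_poly14_le (v - (12/5 : ℝ)) (2/5 : ℝ) hd (63488293692/93994140625 : ℝ) (63488293692/93994140625 : ℝ) (by norm_num [abs_le]) (-1260320609/3417968750 : ℝ) (1260320609/3417968750 : ℝ) (by norm_num [abs_le]) (-7699894/68359375 : ℝ) (7699894/68359375 : ℝ) (by norm_num [abs_le]) (10058677/328125000 : ℝ) (10058677/328125000 : ℝ) (by norm_num [abs_le]) (152339/27343750 : ℝ) (152339/27343750 : ℝ) (by norm_num [abs_le]) (-59611/56250000 : ℝ) (59611/56250000 : ℝ) (by norm_num [abs_le]) (-989/6562500 : ℝ) (989/6562500 : ℝ) (by norm_num [abs_le]) (311/25200000 : ℝ) (311/25200000 : ℝ) (by norm_num [abs_le]) (1/3780000 : ℝ) (1/3780000 : ℝ) (by norm_num [abs_le]) (-47/90720000 : ℝ) (47/90720000 : ℝ) (by norm_num [abs_le]) (-1/16632000 : ℝ) (1/16632000 : ℝ) (by norm_num [abs_le]) (-1/479001600 : ℝ) (1/479001600 : ℝ) (by norm_num [abs_le]) (0 : ℝ) (0 : ℝ) (by norm_num [abs_le]) (0 : ℝ) (0 : ℝ) (by norm_num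 [abs_le])
  have hlow := (abs_le.mp hb).1
  have hid : (-1 : ℝ) + (1/2 : ℝ) * v ^ 2 + (-1/24 : ℝ) * v ^ 4 + (1/720 : ℝ) * v ^ 6 + (-1/40320 : ℝ) * v ^ 8 + (1/3628800 : ℝ) * v ^ 10 + (-1/479001600 : ℝ) * v ^ 12 = (346552335667/469970703125 : ℝ) + ((63488293692/93994140625 : ℝ) * (v - (12/5 : ℝ)) ^ 1 + ((-1260320609/3417968750 : ℝ) * (v - (12/5 : ℝ)) ^ 2 + ((-7699894/68359375 : ℝ) * (v - (12/5 : ℝ)) ^ 3 + ((10058677/328125000 : ℝ) * (v - (12/5 : ℝ)) ^ 4 + ((152339/27343750 : ℝ) * (v - (12/5 : ℝ)) ^ 5 + ((-59611/56250000 : ℝ) * (v - (12/5 : ℝ)) ^ 6 + ((-989/6562500 : ℝ) * (v - (12/5 : ℝ)) ^ 7 + ((311/25200000 : ℝ) * (v - (12/5 : ℝ)) ^ 8 + ((1/3780000 : ℝ) * (v - (12/5 : ℝ)) ^ 9 + ((-47/90720000 : ℝ) * (v - (12/5 : ℝ)) ^ 10 + ((-1/16632000 : ℝ) * (v - (12/5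 : ℝ)) ^ 11 + ((-1/479001600 : ℝ) * (v - (12/5 : ℝ)) ^ 12 + ((0 : ℝ) * (v - (12/5 : ℝ)) ^ 13 + ((0 : ℝ) * (v - (12/5 : ℝ)) ^ 14)))))))))))))) := by ring
  have hnum : (63488293692/93994140625 : ℝ) * (2/5 : ℝ) ^ 1 + ((1260320609/3417968750 : ℝ) * (2/5 : ℝ) ^ 2 + ((7699894/68359375 : ℝ) * (2/5 : ℝ) ^ 3 + ((10058677/328125000 : ℝ) * (2/5 : ℝ) ^ 4 + ((152339/27343750 : ℝ) * (2/5 : ℝ) ^ 5 + ((59611/56250000 : ℝ) * (2/5 : ℝ) ^ 6 + ((989/6562500 : ℝ) * (2/5 : ℝ) ^ 7 + ((311/25200000 : ℝ) * (2/5 : ℝ) ^ 8 + ((1/3780000 : ℝ) * (2/5 : ℝ) ^ 9 + ((47/90720000 : ℝ) * (2/5 : ℝ) ^ 10 + ((1/16632000 : ℝ) * (2/5 : ℝ) ^ 11 + ((1/479001600 : ℝ) * (2/5 : ℝ) ^ 12 + ((0 : ℝ) * (2/5 : ℝ) ^ 13 + ((0 : ℝ) * (2/5 : ℝ) ^ 14)))))))))))))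 ≤ (346552335667/469970703125 : ℝ) := by norm_num
  linarith

lemma regPs13 (v : ℝ) (hlo : (2 : ℝ) ≤ v) (hhi : v ≤ (14/5 : ℝ)) :
    0 ≤ (1 : ℝ) * v ^ 1 + (-1/6 : ℝ) * v ^ 3 + (1/120 : ℝ) * v ^ 5 + (-1/5040 : ℝ) * v ^ 7 + (1/362880 : ℝ) * v ^ 9 + (-1/39916800 : ℝ) * v ^ 11 + (1/6227020800 : ℝ) * v ^ 13 := by
  have hd : |v - (12/5 : ℝ)| ≤ (2/5 : ℝ) := by rw [abs_le]; constructor <;> linarith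
  have hb := abs_poly14_le (v - (12/5 : ℝ)) (2/5 : ℝ) hd (-346552335667/469970703125 : ℝ) (346552335667/469970703125 : ℝ) (by norm_num [abs_le]) (-31744146846/93994140625 : ℝ) (31744146846/93994140625 : ℝ) (by norm_num [abs_le]) (1260320609/10253906250 : ℝ) (1260320609/10253906250 : ℝ) (by norm_num [abs_le]) (3849947/136718750 : ℝ) (3849947/136718750 : ℝ) (by norm_num [abs_le]) (-10058677/1640625000 : ℝ) (10058677/1640625000 : ℝ) (by norm_num [abs_le]) (-152339/164062500 : ℝ) (152339/164062500 : ℝ) (by norm_num [abs_le]) (59611/393750000 : ℝ) (59611/393750000 : ℝ) (by norm_num [abs_le]) (989/52500000 : ℝ) (989/52500000 : ℝ) (by norm_num [abs_le]) (-311/226800000 : ℝ) (311/226800000 : ℝ) (by norm_num [abs_le]) (-1/37800000 : ℝ) (1/37800000 : ℝ) (by norm_num [abs_le]) (47/997920000 : ℝ) (47/997920000 : ℝ) (by norm_num [abs_le]) (1/199584000 : ℝ) (1/199584000 : ℝ) (by norm_num [abs_le]) (1/6227020800 : ℝ) (1/6227020800 : ℝ) (by norm_num [abs_le]) (0 : ℝ)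 (0 : ℝ) (by norm_num [abs_le])
  have hlow := (abs_le.mp hb).1
  have hid : (1 : ℝ) * v ^ 1 + (-1/6 : ℝ) * v ^ 3 + (1/120 : ℝ) * v ^ 5 + (-1/5040 : ℝ) * v ^ 7 + (1/362880 : ℝ) * v ^ 9 + (-1/39916800 : ℝ) * v ^ 11 + (1/6227020800 : ℝ) * v ^ 13 = (20634125431596/30548095703125 : ℝ) + ((-346552335667/469970703125 : ℝ) * (v - (12/5 : ℝ)) ^ 1 + ((-31744146846/93994140625 : ℝ) * (v - (12/5 : ℝ)) ^ 2 + ((1260320609/10253906250 : ℝ) * (v - (12/5 : ℝ)) ^ 3 + ((3849947/136718750 : ℝ) * (v - (12/5 : ℝ)) ^ 4 + ((-10058677/1640625000 : ℝ) * (v - (12/5 : ℝ)) ^ 5 + ((-152339/164062500 : ℝ) * (v - (12/5 : ℝ)) ^ 6 + ((59611/393750000 : ℝ) * (v - (12/5 : ℝ)) ^ 7 + ((989/52500000 : ℝ) * (v - (12/5 : ℝ)) ^ 8 + ((-311/226800000 : ℝ) * (v - (12/5 : ℝ)) ^ 9 + ((-1/37800000 : ℝ) * (v - (12/5 : ℝ))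 ^ 10 + ((47/997920000 : ℝ) * (v - (12/5 : ℝ)) ^ 11 + ((1/199584000 : ℝ) * (v - (12/5 : ℝ)) ^ 12 + ((1/6227020800 : ℝ) * (v - (12/5 : ℝ)) ^ 13 + ((0 : ℝ) * (v - (12/5 : ℝ)) ^ 14)))))))))))))) := by ring
  have hnum : (346552335667/469970703125 : ℝ) * (2/5 : ℝ) ^ 1 + ((31744146846/93994140625 : ℝ) * (2/5 : ℝ) ^ 2 + ((1260320609/10253906250 : ℝ) * (2/5 : ℝ) ^ 3 + ((3849947/136718750 : ℝ) * (2/5 : ℝ) ^ 4 + ((10058677/1640625000 : ℝ) * (2/5 : ℝ) ^ 5 + ((152339/164062500 : ℝ) * (2/5 : ℝ) ^ 6 + ((59611/393750000 : ℝ) * (2/5 : ℝ) ^ 7 + ((989/52500000 : ℝ) * (2/5 : ℝ) ^ 8 + ((311/226800000 : ℝ) * (2/5 : ℝ) ^ 9 + ((1/37800000 : ℝ) * (2/5 : ℝ) ^ 10 + ((47/997920000 : ℝ) * (2/5 : ℝ) ^ 11 + ((1/199584000 : ℝ) * (2/5 : ℝ) ^ 12 + ((1/6227020800 : ℝ) *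 (2/5 : ℝ) ^ 13 + ((0 : ℝ) * (2/5 : ℝ) ^ 14))))))))))))) ≤ (20634125431596/30548095703125 : ℝ) := by norm_num
  linarith

lemma regC (v : ℝ) (hlo : (14/5 : ℝ) ≤ v) (hhi : v ≤ (39/10 : ℝ)) :
    0 ≤ (-677/5000000 : ℝ) * v ^ 1 + (15629/312500 : ℝ) * v ^ 2 + (-101337/5000000 : ℝ) * v ^ 4 + (2162033/900000000 : ℝ) * v ^ 6 + (-929011/12600000000 : ℝ) * v ^ 8 + (50191/43200000000 : ℝ) * v ^ 10 + (-3412033/299376000000000 : ℝ) * v ^ 12 + (-1/43589145600 : ℝ) * v ^ 14 := by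
  rcases le_or_gt v (61/20 : ℝ) with hc0 | hc0
  · have hd : |v - (117/40 : ℝ)| ≤ (1/8 : ℝ) := by rw [abs_le]; constructor <;> linarith
    have hb := abs_poly14_le (v - (117/40 : ℝ)) (1/8 : ℝ) hd (81282931694545706655164699411/187904819200000000000000000000 : ℝ) (81282931694545706655164699411/187904819200000000000000000000 : ℝ) (by norm_num [abs_le]) (61923772996683170658020212393/103347650560000000000000000000 : ℝ) (61923772996683170658020212393/103347650560000000000000000000 : ℝ) (by norm_num [abs_le]) (38258609833551547501293609/129184563200000000000000000 : ℝ) (38258609833551547501293609/129184563200000000000000000 : ℝ) (by norm_num [abs_le]) (37288271580016440917013/1174405120000000000000000 : ℝ) (37288271580016440917013/1174405120000000000000000 : ℝ) (by norm_num [abs_le]) (-165008142935127258117/10485760000000000000000 : ℝ) (165008142935127258117/10485760000000000000000 : ℝ) (by norm_num [abs_le]) (-144193406232245152397/33030144000000000000000 : ℝ) (144193406232245152397/33030144000000000000000 : ℝ) (by norm_num [abs_le]) (-25142072077450393/80281600000000000000 : ℝ) (25142072077450393/80281600000000000000 : ℝ) (by norm_num [abs_le]) (-340729084948073/4128768000000000000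 : ℝ) (340729084948073/4128768000000000000 : ℝ) (by norm_num [abs_le]) (-664003661269/17203200000000000 : ℝ) (664003661269/17203200000000000 : ℝ) (by norm_num [abs_le]) (-269200097389/38707200000000000 : ℝ) (269200097389/38707200000000000 : ℝ) (by norm_num [abs_le]) (-540223307/887040000000000 : ℝ) (540223307/887040000000000 : ℝ) (by norm_num [abs_le]) (-910057/31104000000000 : ℝ) (910057/31104000000000 : ℝ) (by norm_num [abs_le]) (-1/1064448000 : ℝ) (1/1064448000 : ℝ) (by norm_num [abs_le]) (-1/43589145600 : ℝ) (1/43589145600 : ℝ) (by norm_num [abs_le])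
    have hlow := (abs_le.mp hb).1
    have hid : (-677/5000000 : ℝ) * v ^ 1 + (15629/312500 : ℝ) * v ^ 2 + (-101337/5000000 : ℝ) * v ^ 4 + (2162033/900000000 : ℝ) * v ^ 6 + (-929011/12600000000 : ℝ) * v ^ 8 + (50191/43200000000 : ℝ) * v ^ 10 + (-3412033/299376000000000 : ℝ) * v ^ 12 + (-1/43589145600 : ℝ) * v ^ 14 = (118117364362900154969821873392429/1157493686272000000000000000000000 : ℝ) + ((81282931694545706655164699411/187904819200000000000000000000 : ℝ) * (v - (117/40 : ℝ)) ^ 1 + ((61923772996683170658020212393/103347650560000000000000000000 : ℝ) * (v - (117/40 : ℝ)) ^ 2 + ((38258609833551547501293609/129184563200000000000000000 : ℝ) * (v - (117/40 : ℝ)) ^ 3 + ((37288271580016440917013/1174405120000000000000000 : ℝ) * (v - (117/40 : ℝ)) ^ 4 + ((-165008142935127258117/10485760000000000000000 : ℝ) * (v - (117/40 : ℝ)) ^ 5 + ((-144193406232245152397/33030144000000000000000 : ℝ) * (v - (117/40 : ℝ)) ^ 6 + ((-25142072077450393/80281600000000000000 : ℝ) * (v - (117/40 : ℝ)) ^ 7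 + ((-340729084948073/4128768000000000000 : ℝ) * (v - (117/40 : ℝ)) ^ 8 + ((-664003661269/17203200000000000 : ℝ) * (v - (117/40 : ℝ)) ^ 9 + ((-269200097389/38707200000000000 : ℝ) * (v - (117/40 : ℝ)) ^ 10 + ((-540223307/887040000000000 : ℝ) * (v - (117/40 : ℝ)) ^ 11 + ((-910057/31104000000000 : ℝ) * (v - (117/40 : ℝ)) ^ 12 + ((-1/1064448000 : ℝ) * (v - (117/40 : ℝ)) ^ 13 + ((-1/43589145600 : ℝ) * (v - (117/40 : ℝ)) ^ 14)))))))))))))) := by ring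
    have hnum : (81282931694545706655164699411/187904819200000000000000000000 : ℝ) * (1/8 : ℝ) ^ 1 + ((61923772996683170658020212393/103347650560000000000000000000 : ℝ) * (1/8 : ℝ) ^ 2 + ((38258609833551547501293609/129184563200000000000000000 : ℝ) * (1/8 : ℝ) ^ 3 + ((37288271580016440917013/1174405120000000000000000 : ℝ) * (1/8 : ℝ) ^ 4 + ((165008142935127258117/10485760000000000000000 : ℝ) * (1/8 : ℝ) ^ 5 + ((144193406232245152397/33030144000000000000000 : ℝ) * (1/8 : ℝ) ^ 6 + ((25142072077450393/80281600000000000000 : ℝ) * (1/8 : ℝ) ^ 7 + ((340729084948073/4128768000000000000 : ℝ) * (1/8 : ℝ) ^ 8 + ((664003661269/17203200000000000 : ℝ) * (1/8 : ℝ) ^ 9 + ((269200097389/38707200000000000 : ℝ) * (1/8 : ℝ) ^ 10 + ((540223307/887040000000000 : ℝ) * (1/8 : ℝ) ^ 11 + ((910057/31104000000000 : ℝ) * (1/8 : ℝ) ^ 12 + ((1/1064448000 : ℝ) * (1/8 : ℝ) ^ 13 + ((1/43589145600 : ℝ) * (1/8 : ℝ) ^ 14))))))))))))) ≤ (118117364362900154969821873392429/1157493686272000000000000000000000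 : ℝ) := by norm_num
    linarith
  rcases le_or_gt v (71/20 : ℝ) with hc1 | hc1
  · have hd : |v - (33/10 : ℝ)| ≤ (1/4 : ℝ) := by rw [abs_le]; constructor <;> linarith
    have hb := abs_poly14_le (v - (33/10 : ℝ)) (1/4 : ℝ) hd (164424005422178830573/162500000000000000000 : ℝ) (164424005422178830573/162500000000000000000 : ℝ) (by norm_num [abs_le]) (265857981826173410059/280000000000000000000 : ℝ) (265857981826173410059/280000000000000000000 : ℝ) (by norm_num [abs_le]) (1774003247178550707/5600000000000000000 : ℝ) (1774003247178550707/5600000000000000000 : ℝ) (by norm_num [abs_le]) (-17239227023778489/2240000000000000000 : ℝ) (17239227023778489/2240000000000000000 : ℝ) (by norm_num [abs_le]) (-7514451261495541/280000000000000000 : ℝ) (7514451261495541/280000000000000000 : ℝ) (by norm_num [abs_le]) (-2880136076426867/504000000000000000 : ℝ) (2880136076426867/504000000000000000 : ℝ) (by norm_num [abs_le]) (-23646791356837/29400000000000000 : ℝ) (23646791356837/29400000000000000 : ℝ) (by norm_num [abs_le]) (-75570694483/288000000000000 : ℝ) (75570694483/288000000000000 : ℝ) (by norm_num [abs_le]) (-1757487149/25200000000000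 : ℝ) (1757487149/25200000000000 : ℝ) (by norm_num [abs_le]) (-368669401/37800000000000 : ℝ) (368669401/37800000000000 : ℝ) (by norm_num [abs_le]) (-5680783/7560000000000 : ℝ) (5680783/7560000000000 : ℝ) (by norm_num [abs_le]) (-10218283/299376000000000 : ℝ) (10218283/299376000000000 : ℝ) (by norm_num [abs_le]) (-1/943488000 : ℝ) (1/943488000 : ℝ) (by norm_num [abs_le]) (-1/43589145600 : ℝ) (1/43589145600 : ℝ) (by norm_num [abs_le])
    have hlow := (abs_le.mp hb).1
    have hid : (-677/5000000 : ℝ) * v ^ 1 + (15629/312500 : ℝ) * v ^ 2 + (-101337/5000000 : ℝ) * v ^ 4 + (2162033/900000000 : ℝ) * v ^ 6 + (-929011/12600000000 : ℝ) * v ^ 8 + (50191/43200000000 : ℝ) * v ^ 10 + (-3412033/299376000000000 : ℝ) * v ^ 12 + (-1/43589145600 : ℝ) * v ^ 14 = (3716382658902339180128979/10192000000000000000000000 : ℝ) + ((164424005422178830573/162500000000000000000 : ℝ) * (v - (33/10 : ℝ)) ^ 1 + ((265857981826173410059/280000000000000000000 : ℝ) * (v - (33/10 : ℝ)) ^ 2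 + ((1774003247178550707/5600000000000000000 : ℝ) * (v - (33/10 : ℝ)) ^ 3 + ((-17239227023778489/2240000000000000000 : ℝ) * (v - (33/10 : ℝ)) ^ 4 + ((-7514451261495541/280000000000000000 : ℝ) * (v - (33/10 : ℝ)) ^ 5 + ((-2880136076426867/504000000000000000 : ℝ) * (v - (33/10 : ℝ)) ^ 6 + ((-23646791356837/29400000000000000 : ℝ) * (v - (33/10 : ℝ)) ^ 7 + ((-75570694483/288000000000000 : ℝ) * (v - (33/10 : ℝ)) ^ 8 + ((-1757487149/25200000000000 : ℝ) * (v - (33/10 : ℝ)) ^ 9 + ((-368669401/37800000000000 : ℝ) * (v - (33/10 : ℝ)) ^ 10 + ((-5680783/7560000000000 : ℝ) * (v - (33/10 : ℝ)) ^ 11 + ((-10218283/299376000000000 : ℝ) * (v - (33/10 : ℝ)) ^ 12 + ((-1/943488000 : ℝ) * (v - (33/10 : ℝ)) ^ 13 + ((-1/43589145600 : ℝ) * (v - (33/10 : ℝ)) ^ 14)))))))))))))) := by ring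
    have hnum : (164424005422178830573/162500000000000000000 : ℝ) * (1/4 : ℝ) ^ 1 + ((265857981826173410059/280000000000000000000 : ℝ) * (1/4 : ℝ) ^ 2 + ((1774003247178550707/5600000000000000000 : ℝ) * (1/4 : ℝ) ^ 3 + ((17239227023778489/2240000000000000000 : ℝ) * (1/4 : ℝ) ^ 4 + ((7514451261495541/280000000000000000 : ℝ) * (1/4 : ℝ) ^ 5 + ((2880136076426867/504000000000000000 : ℝ) * (1/4 : ℝ) ^ 6 + ((23646791356837/29400000000000000 : ℝ) * (1/4 : ℝ) ^ 7 + ((75570694483/288000000000000 : ℝ) * (1/4 : ℝ) ^ 8 + ((1757487149/25200000000000 : ℝ) * (1/4 : ℝ) ^ 9 + ((368669401/37800000000000 : ℝ) * (1/4 : ℝ) ^ 10 + ((5680783/7560000000000 : ℝ) * (1/4 : ℝ) ^ 11 + ((10218283/299376000000000 : ℝ) * (1/4 : ℝ) ^ 12 + ((1/943488000 : ℝ) * (1/4 : ℝ) ^ 13 + ((1/43589145600 : ℝ) * (1/4 : ℝ) ^ 14))))))))))))) ≤ (3716382658902339180128979/10192000000000000000000000 : ℝ) := by norm_num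
    linarith
  have hd : |v - (149/40 : ℝ)| ≤ (7/40 : ℝ) := by rw [abs_le]; constructor <;> linarith
  have hb := abs_poly14_le (v - (149/40 : ℝ)) (7/40 : ℝ) hd (12950043703236493395434986997256167/6529504562380800000000000000000000 : ℝ) (12950043703236493395434986997256167/6529504562380800000000000000000000 : ℝ) (by norm_num [abs_le]) (33184247577807767984741952009451/25113479086080000000000000000000 : ℝ) (33184247577807767984741952009451/25113479086080000000000000000000 : ℝ) (by norm_num [abs_le]) (7700251966067473905068266379/31391848857600000000000000000 : ℝ) (7700251966067473905068266379/31391848857600000000000000000 : ℝ) (by norm_num [abs_le]) (-23716003348127351463262801/285380444160000000000000000 : ℝ) (23716003348127351463262801/285380444160000000000000000 : ℝ) (by norm_num [abs_le]) (-116983575588548892751903/2548039680000000000000000 : ℝ) (116983575588548892751903/2548039680000000000000000 : ℝ) (by norm_num [abs_le]) (-2959634949854337865717/297271296000000000000000 : ℝ) (2959634949854337865717/297271296000000000000000 : ℝ) (by norm_num [abs_le]) (-14620148973790267081/6502809600000000000000 : ℝ) (14620148973790267081/6502809600000000000000 : ℝ) (by norm_num [abs_le]) (-22983639091407217/37158912000000000000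 : ℝ) (22983639091407217/37158912000000000000 : ℝ) (by norm_num [abs_le]) (-166182864872197/1393459200000000000 : ℝ) (166182864872197/1393459200000000000 : ℝ) (by norm_num [abs_le]) (-4771549671509/348364800000000000 : ℝ) (4771549671509/348364800000000000 : ℝ) (by norm_num [abs_le]) (-22538770633/23950080000000000 : ℝ) (22538770633/23950080000000000 : ℝ) (by norm_num [abs_le]) (-13810627/342144000000000 : ℝ) (13810627/342144000000000 : ℝ) (by norm_num [abs_le]) (-149/124540416000 : ℝ) (149/124540416000 : ℝ) (by norm_num [abs_le]) (-1/43589145600 : ℝ) (1/43589145600 : ℝ) (by norm_num [abs_le])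
  have hlow := (abs_le.mp hb).1
  have hid : (-677/5000000 : ℝ) * v ^ 1 + (15629/312500 : ℝ) * v ^ 2 + (-101337/5000000 : ℝ) * v ^ 4 + (2162033/900000000 : ℝ) * v ^ 6 + (-929011/12600000000 : ℝ) * v ^ 8 + (50191/43200000000 : ℝ) * v ^ 10 + (-3412033/299376000000000 : ℝ) * v ^ 12 + (-1/43589145600 : ℝ) * v ^ 14 = (3619337429461329496603916290611239051/3656522554933248000000000000000000000 : ℝ) + ((12950043703236493395434986997256167/6529504562380800000000000000000000 : ℝ) * (v - (149/40 : ℝ)) ^ 1 + ((33184247577807767984741952009451/25113479086080000000000000000000 : ℝ) * (v - (149/40 : ℝ)) ^ 2 + ((7700251966067473905068266379/31391848857600000000000000000 : ℝ) * (v - (149/40 : ℝ)) ^ 3 + ((-23716003348127351463262801/285380444160000000000000000 : ℝ) * (v - (149/40 : ℝ)) ^ 4 + ((-116983575588548892751903/2548039680000000000000000 : ℝ) * (v - (149/40 : ℝ)) ^ 5 + ((-2959634949854337865717/297271296000000000000000 : ℝ) * (v - (149/40 : ℝ)) ^ 6 + ((-14620148973790267081/6502809600000000000000 : ℝ) * (v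 - (149/40 : ℝ)) ^ 7 + ((-22983639091407217/37158912000000000000 : ℝ) * (v - (149/40 : ℝ)) ^ 8 + ((-166182864872197/1393459200000000000 : ℝ) * (v - (149/40 : ℝ)) ^ 9 + ((-4771549671509/348364800000000000 : ℝ) * (v - (149/40 : ℝ)) ^ 10 + ((-22538770633/23950080000000000 : ℝ) * (v - (149/40 : ℝ)) ^ 11 + ((-13810627/342144000000000 : ℝ) * (v - (149/40 : ℝ)) ^ 12 + ((-149/124540416000 : ℝ) * (v - (149/40 : ℝ)) ^ 13 + ((-1/43589145600 : ℝ) * (v - (149/40 : ℝ)) ^ 14)))))))))))))) := by ring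
  have hnum : (12950043703236493395434986997256167/6529504562380800000000000000000000 : ℝ) * (7/40 : ℝ) ^ 1 + ((33184247577807767984741952009451/25113479086080000000000000000000 : ℝ) * (7/40 : ℝ) ^ 2 + ((7700251966067473905068266379/31391848857600000000000000000 : ℝ) * (7/40 : ℝ) ^ 3 + ((23716003348127351463262801/285380444160000000000000000 : ℝ) * (7/40 : ℝ) ^ 4 + ((116983575588548892751903/2548039680000000000000000 : ℝ) * (7/40 : ℝ) ^ 5 + ((2959634949854337865717/297271296000000000000000 : ℝ) * (7/40 : ℝ) ^ 6 + ((14620148973790267081/6502809600000000000000 : ℝ) * (7/40 : ℝ) ^ 7 + ((22983639091407217/37158912000000000000 : ℝ) * (7/40 : ℝ) ^ 8 + ((166182864872197/1393459200000000000 : ℝ) * (7/40 : ℝ) ^ 9 + ((4771549671509/348364800000000000 : ℝ) * (7/40 : ℝ) ^ 10 + ((22538770633/23950080000000000 : ℝ) * (7/40 : ℝ) ^ 11 + ((13810627/342144000000000 : ℝ) * (7/40 : ℝ) ^ 12 + ((149/124540416000 : ℝ) * (7/40 : ℝ) ^ 13 + ((1/43589145600 : ℝ) * (7/40 : ℝ)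 ^ 14))))))))))))) ≤ (3619337429461329496603916290611239051/3656522554933248000000000000000000000 : ℝ) := by norm_num
  linarith

lemma theta_loc (θ : ℝ) (hθ : θ ∈ Set.Ioo 0 Real.pi)
    (heq : θ * Real.sin θ + Real.cos θ - 1 = 0)
    (huniq : ∀ x ∈ Set.Ioo 0 Real.pi, x * Real.sin x + Real.cos x - 1 = 0 → x = θ) :
    (2331/1000 : ℝ) ≤ θ ∧ θ ≤ (23313/10000 : ℝ) := by
  have hgl : 0 < (2331/1000 : ℝ) * Real.sin (2331/1000 : ℝ) + Real.cos (2331/1000 : ℝ) - 1 := by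
    have h1 := lad_s11 (2331/1000 : ℝ) (by norm_num)
    have h2 := lad_c14 (2331/1000 : ℝ) (by norm_num)
    nlinarith [h1, h2]
  have hgu : (23313/10000 : ℝ) * Real.sin (23313/10000 : ℝ) + Real.cos (23313/10000 : ℝ) - 1 < 0 := by
    have h1 := lad_s13 (23313/10000 : ℝ) (by norm_num)
    have h2 := lad_c12 (23313/10000 : ℝ) (by norm_num)
    nlinarith [h1, h2]
  have hcont : ContinuousOn (fun x : ℝ => x * Real.sin x + Real.cos x - 1)
      (Set.Icc (2331/1000 : ℝ) (23313/10000 : ℝ)) := by fun_prop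
  have hsub := intermediate_value_Icc' (by norm_num : (2331/1000 : ℝ) ≤ (23313/10000 : ℝ)) hcont
  have h0mem : (0:ℝ) ∈ Set.Icc ((23313/10000 : ℝ) * Real.sin (23313/10000 : ℝ) + Real.cos (23313/10000 : ℝ) - 1)
      ((2331/1000 : ℝ) * Real.sin (2331/1000 : ℝ) + Real.cos (2331/1000 : ℝ) - 1) := ⟨le_of_lt hgu, le_of_lt hgl⟩
  obtain ⟨x, hx, hgx⟩ := hsub h0mem
  have hxio : x ∈ Set.Ioo 0 Real.pi := by
    constructor
    · have := hx.1; norm_num at this ⊢; linarith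
    · have := hx.2
      have hpi := Real.pi_gt_d6
      norm_num at this ⊢
      linarith
  have hxθ := huniq x hxio hgx
  rw [hxθ] at hx
  exact ⟨hx.1, hx.2⟩
lemma key_main (θ s c : ℝ) (hθ0 : 0 < θ) (hspos : 0 < s)
    (hsθ : Real.sin θ = s)
    (hA2 : s*θ + Real.cos θ - 1 = 0)
    (hpy : s^2 + (Real.cos θ)^2 = 1)
    (hcθ : c*θ = s)
    (hl : (2331/1000 : ℝ) ≤ θ) (hu : θ ≤ (23313/10000 : ℝ)) :
    ∀ y : ℝ, 0 ≤ y → 0 ≤ (s^2 - c^2)*y^2 + 2*Real.cos y + 2*c*(y*Real.sin y) - 2 := by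
  have h2s : s*(s*(1+θ^2)) = s*(2*θ) := by
    linear_combination hpy + (s*θ - 1 - Real.cos θ)*hA2
  have hs1p : s*(1+θ^2) = 2*θ := mul_left_cancel₀ (ne_of_gt hspos) h2s
  have hp2 : (0:ℝ) < 1 + θ^2 := by positivity
  have hc1p0 : c*(1+θ^2) = 2 := by
    have hθne : θ ≠ 0 := ne_of_gt hθ0
    have hh : c*θ*(1+θ^2) = s*(1+θ^2) := by rw [hcθ]
    rw [hs1p] at hh
    exact mul_left_cancel₀ hθne (by linear_combination hh)
  have hc2 : c = 2/(1+θ^2) := by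
    rw [eq_div_iff (ne_of_gt hp2)]
    exact hc1p0
  have hc1p : c*(1+θ^2) = 2 := hc1p0
  have hclo : (1554011/5000000 : ℝ) ≤ c := by
    rw [hc2, le_div_iff₀ hp2]
    nlinarith
  have hchi : c ≤ (3108699/10000000 : ℝ) := by
    rw [hc2, div_le_iff₀ hp2]
    nlinarith
  have hc0 : 0 ≤ c := by rw [hc2]; positivity
  have hsc : (s^2 - c^2)*(1+θ^2)^2 = 4*θ^2 - 4 := by
    linear_combination (s*(1+θ^2)+2*θ)*hs1p - (c*(1+θ^2)+2)*hc1p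
  have hσl : 0 ≤ θ^2 - (2331/1000 : ℝ)^2 := by nlinarith
  have hσu : 0 ≤ (23313/10000 : ℝ)^2 - θ^2 := by nlinarith
  have hk : (1071021/2500000 : ℝ) ≤ s^2 - c^2 := by
    nlinarith [hsc, mul_nonneg hσl hσu, hp2, mul_pos hp2 hp2]
  intro y hy
  rcases le_total y 2 with hA | hA
  · -- region A : 0 ≤ y ≤ 2
    have e1 := lad_c14 y hy
    have e2 := lad_s11 y hy
    have hy4 : y^2 ≤ 4 := by nlinarith
    have e3 := regQs (y^2) (sq_nonneg y) hy4
    have e4 := regFA (y^2) (sq_nonneg y) hy4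
    have e5 : 0 ≤ (s^2 - c^2 - (1071021/2500000 : ℝ))*y^2 := mul_nonneg (by linarith) (sq_nonneg y)
    have e6 : 0 ≤ y^2 * ((15629/312500 : ℝ) + (-101337/5000000 : ℝ) * (y^2) ^ 1 + (2162033/900000000 : ℝ) * (y^2) ^ 2 + (-929011/12600000000 : ℝ) * (y^2) ^ 3 + (50191/43200000000 : ℝ) * (y^2) ^ 4 + (-3412033/299376000000000 : ℝ) * (y^2) ^ 5 + (-1/43589145600 : ℝ) * (y^2) ^ 6) := mul_nonneg (sq_nonneg y) e4
    have e8 : 0 ≤ (c - (1554011/5000000 : ℝ)) * (y^2 * ((1 : ℝ) + (-1/6 : ℝ) * (y^2) ^ 1 + (1/120 : ℝ) * (y^2) ^ 2 + (-1/5040 : ℝ) * (y^2) ^ 3 + (1/362880 : ℝ) * (y^2) ^ 4 + (-1/39916800 : ℝ) * (y^2) ^ 5)) :=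
      mul_nonneg (by linarith) (mul_nonneg (sq_nonneg y) e3)
    have e9 : 0 ≤ (2*c) * (y * (Real.sin y - ((1 : ℝ) * y ^ 1 + (-1/6 : ℝ) * y ^ 3 + (1/120 : ℝ) * y ^ 5 + (-1/5040 : ℝ) * y ^ 7 + (1/362880 : ℝ) * y ^ 9 + (-1/39916800 : ℝ) * y ^ 11))) :=
      mul_nonneg (by linarith) (mul_nonneg hy (by linarith))
    nlinarith [e1, e5, e6, e8, e9]
  rcases le_total y (14/5 : ℝ) with hB | hB
  · -- region B : 2 ≤ y ≤ 2.8
    have hθA : (2:ℝ) ≤ θ := by linarith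
    have hθB : θ ≤ (14/5:ℝ) := by linarith
    have hdF : ∀ z : ℝ, HasDerivAt (fun z : ℝ => (s^2 - c^2)*z^2 + 2*Real.cos z + 2*c*(z*Real.sin z) - 2) (2*(s^2-c^2)*z - 2*Real.sin z + 2*c*(Real.sin z + z*Real.cos z)) z := by
      intro z
      have h0 := ((((hasDerivAt_pow 2 z).const_mul (s^2 - c^2)).add
        ((Real.hasDerivAt_cos z).const_mul 2)).add
        (((hasDerivAt_id' z).mul (Real.hasDerivAt_sin z)).const_mul (2*c))).sub (hasDerivAt_const z 2)
      refine h0.congr_deriv ?_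
      push_cast
      ring
    have hdF1 : ∀ z : ℝ, HasDerivAt (fun z : ℝ => 2*(s^2-c^2)*z - 2*Real.sin z + 2*c*(Real.sin z + z*Real.cos z)) (2*(s^2-c^2) - 2*(1-2*c)*Real.cos z - 2*c*(z*Real.sin z)) z := by
      intro z
      have h0 := (((hasDerivAt_id' z).const_mul (2*(s^2-c^2))).sub
        ((Real.hasDerivAt_sin z).const_mul 2)).add
        (((Real.hasDerivAt_sin z).add ((hasDerivAt_id' z).mul (Real.hasDerivAt_cos z))).const_mul (2*c))
      refine h0.congr_deriv ?_
      ring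
    have hF2nn : ∀ z : ℝ, 2 ≤ z → z ≤ (14/5:ℝ) → 0 ≤ 2*(s^2-c^2) - 2*(1-2*c)*Real.cos z - 2*c*(z*Real.sin z) := by
      intro z h1 h2
      have hz0 : (0:ℝ) ≤ z := by linarith
      have e1 := lad_c12 z hz0
      have e2 := lad_s13 z hz0
      have e3 := regPc12 z h1 h2
      have e4 := regPs13 z h1 h2
      have e5 := regG z h1 h2
      have t1 : (1-2*(3108699/10000000 : ℝ))*(-((1 : ℝ) + (-1/2 : ℝ) * z ^ 2 + (1/24 : ℝ) * z ^ 4 + (-1/720 : ℝ) * z ^ 6 + (1/40320 : ℝ) * z ^ 8 + (-1/3628800 : ℝ) * z ^ 10 + (1/479001600 : ℝ) * z ^ 12)) ≤ (1-2*c)*(-Real.cos z) :=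
        mul_le_mul (by linarith) (by linarith) (by linarith) (by linarith)
      have t2a : c*(z*Real.sin z) ≤ c*(z*((1 : ℝ) * z ^ 1 + (-1/6 : ℝ) * z ^ 3 + (1/120 : ℝ) * z ^ 5 + (-1/5040 : ℝ) * z ^ 7 + (1/362880 : ℝ) * z ^ 9 + (-1/39916800 : ℝ) * z ^ 11 + (1/6227020800 : ℝ) * z ^ 13)) :=
        mul_le_mul_of_nonneg_left (by nlinarith [e2, hz0]) hc0
      have t2b : c*(z*((1 : ℝ) * z ^ 1 + (-1/6 : ℝ) * z ^ 3 + (1/120 : ℝ) * z ^ 5 + (-1/5040 : ℝ) * z ^ 7 + (1/362880 : ℝ) * z ^ 9 + (-1/39916800 : ℝ) * z ^ 11 + (1/6227020800 : ℝ) * z ^ 13)) ≤ (3108699/10000000 : ℝ)*(z*((1 : ℝ) * z ^ 1 + (-1/6 : ℝ) * z ^ 3 + (1/120 : ℝ) * z ^ 5 + (-1/5040 : ℝ) * z ^ 7 + (1/362880 : ℝ) * z ^ 9 + (-1/39916800 : ℝ) * z ^ 11 + (1/6227020800 : ℝ) * z ^ 13)) :=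
        mul_le_mul_of_nonneg_right hchi (mul_nonneg hz0 (by linarith))
      nlinarith [hk, e5, t1, t2a, t2b]
    have hFθ : (s^2 - c^2)*θ^2 + 2*Real.cos θ + 2*c*(θ*Real.sin θ) - 2 = 0 := by
      linear_combination (2*c*θ)*hsθ + (s*θ + 1 - Real.cos θ)*hA2 + hpy + (s - c*θ)*hcθ
    have hF1θ : 2*(s^2-c^2)*θ - 2*Real.sin θ + 2*c*(Real.sin θ + θ*Real.cos θ) = 0 := by
      linear_combination (2*c - 2)*hsθ + 2*s*hA2 + (2*Real.cos θ - 2*c)*hcθ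
    have hmono1 : MonotoneOn (fun z : ℝ => 2*(s^2-c^2)*z - 2*Real.sin z + 2*c*(Real.sin z + z*Real.cos z)) (Set.Icc 2 (14/5:ℝ)) := by
      apply monotoneOn_of_hasDerivWithinAt_nonneg (convex_Icc _ _)
        (fun z _ => (hdF1 z).continuousAt.continuousWithinAt)
        (f' := fun z : ℝ => 2*(s^2-c^2) - 2*(1-2*c)*Real.cos z - 2*c*(z*Real.sin z))
        (fun z _ => (hdF1 z).hasDerivWithinAt)
      intro z hz
      rw [interior_Icc] at hz
      exact hF2nn z hz.1.le hz.2.le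
    rcases le_total y θ with hyθ | hyθ
    · have hanti : AntitoneOn (fun z : ℝ => (s^2 - c^2)*z^2 + 2*Real.cos z + 2*c*(z*Real.sin z) - 2) (Set.Icc 2 θ) := by
        apply antitoneOn_of_hasDerivWithinAt_nonpos (convex_Icc _ _)
          (fun z _ => (hdF z).continuousAt.continuousWithinAt)
          (f' := fun z : ℝ => 2*(s^2-c^2)*z - 2*Real.sin z + 2*c*(Real.sin z + z*Real.cos z))
          (fun z _ => (hdF z).hasDerivWithinAt)
        intro z hz
        rw [interior_Icc] at hz
        have h9 := hmono1 (Set.mem_Icc.mpr ⟨hz.1.le, by linarith [hz.2, hθB]⟩)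
          (Set.mem_Icc.mpr ⟨hθA, hθB⟩) hz.2.le
        have h9' : 2*(s^2-c^2)*z - 2*Real.sin z + 2*c*(Real.sin z + z*Real.cos z) ≤ 2*(s^2-c^2)*θ - 2*Real.sin θ + 2*c*(Real.sin θ + θ*Real.cos θ) := h9
        show 2*(s^2-c^2)*z - 2*Real.sin z + 2*c*(Real.sin z + z*Real.cos z) ≤ 0
        linarith [hF1θ]
      have h8 := hanti (Set.mem_Icc.mpr ⟨hA, hyθ⟩) (Set.mem_Icc.mpr ⟨hθA, le_refl θ⟩) hyθ
      have h8' : (s^2 - c^2)*θ^2 + 2*Real.cos θ + 2*c*(θ*Real.sin θ) - 2 ≤ (s^2 - c^2)*y^2 + 2*Real.cos y + 2*c*(y*Real.sin y) - 2 := h8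
      linarith [hFθ]
    · have hmonoF : MonotoneOn (fun z : ℝ => (s^2 - c^2)*z^2 + 2*Real.cos z + 2*c*(z*Real.sin z) - 2) (Set.Icc θ (14/5:ℝ)) := by
        apply monotoneOn_of_hasDerivWithinAt_nonneg (convex_Icc _ _)
          (fun z _ => (hdF z).continuousAt.continuousWithinAt)
          (f' := fun z : ℝ => 2*(s^2-c^2)*z - 2*Real.sin z + 2*c*(Real.sin z + z*Real.cos z))
          (fun z _ => (hdF z).hasDerivWithinAt)
        intro z hz
        rw [interior_Icc] at hz
        have h9 := hmono1 (Set.mem_Icc.mpr ⟨hθA, hθB⟩)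
          (Set.mem_Icc.mpr ⟨by linarith [hz.1], hz.2.le⟩) hz.1.le
        have h9' : 2*(s^2-c^2)*θ - 2*Real.sin θ + 2*c*(Real.sin θ + θ*Real.cos θ) ≤ 2*(s^2-c^2)*z - 2*Real.sin z + 2*c*(Real.sin z + z*Real.cos z) := h9
        show 0 ≤ 2*(s^2-c^2)*z - 2*Real.sin z + 2*c*(Real.sin z + z*Real.cos z)
        linarith [hF1θ]
      have h8 := hmonoF (Set.mem_Icc.mpr ⟨le_refl θ, hθB⟩) (Set.mem_Icc.mpr ⟨hyθ, hB⟩) hyθ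
      have h8' : (s^2 - c^2)*θ^2 + 2*Real.cos θ + 2*c*(θ*Real.sin θ) - 2 ≤ (s^2 - c^2)*y^2 + 2*Real.cos y + 2*c*(y*Real.sin y) - 2 := h8
      linarith [hFθ]
  rcases le_total y (39/10 : ℝ) with hC | hC
  · -- region C : 2.8 ≤ y ≤ 3.9
    have hy0 : (0:ℝ) ≤ y := by linarith
    have e1 := lad_c14 y hy0
    have e2 := lad_s11 y hy0
    have e3 := regC y hB hC
    have e5 : 0 ≤ (s^2 - c^2 - (1071021/2500000 : ℝ))*y^2 := mul_nonneg (by linarith) (sq_nonneg y)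
    have u1 : 0 ≤ (2*(1554011/5000000 : ℝ))*(y*(Real.sin y - ((1 : ℝ) * y ^ 1 + (-1/6 : ℝ) * y ^ 3 + (1/120 : ℝ) * y ^ 5 + (-1/5040 : ℝ) * y ^ 7 + (1/362880 : ℝ) * y ^ 9 + (-1/39916800 : ℝ) * y ^ 11))) :=
      mul_nonneg (by norm_num) (mul_nonneg hy0 (by linarith))
    have u2 : 0 ≤ (2*(c - (1554011/5000000 : ℝ)))*(y*Real.sin y + y) :=
      mul_nonneg (by linarith)
        (by nlinarith [mul_nonneg hy0 (show (0:ℝ) ≤ Real.sin y + 1 by linarith [Real.neg_one_le_sin y])])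
    have u3 : 0 ≤ (2*((677/10000000 : ℝ) - (c - (1554011/5000000 : ℝ))))*y := mul_nonneg (by linarith) hy0
    nlinarith [e1, e3, e5, u1, u2, u3]
  · -- region D : y ≥ 3.9
    have hy0 : (0:ℝ) ≤ y := by linarith
    have e5 : 0 ≤ (s^2 - c^2 - (1071021/2500000 : ℝ))*y^2 := mul_nonneg (by linarith) (sq_nonneg y)
    have v1 := Real.neg_one_le_cos y
    have v2 : 0 ≤ c*(y*Real.sin y + y) :=
      mul_nonneg hc0
        (by nlinarith [mul_nonneg hy0 (show (0:ℝ) ≤ Real.sin y + 1 by linarith [Real.neg_one_le_sin y])])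
    have v3 : 0 ≤ ((3108699/10000000 : ℝ) - c)*y := mul_nonneg (by linarith) hy0
    have v4 : 0 ≤ (1071021/2500000 : ℝ)*y^2 - 2*(3108699/10000000 : ℝ)*y - 4 := by nlinarith [sq_nonneg (y - (39/10:ℝ))]
    nlinarith [e5, v1, v2, v3, v4]

theorem chf_first_order_bound
    {Ω : Type*} [MeasurableSpace Ω] (μ : Measure Ω) [IsProbabilityMeasure μ]
    (X : Ω → ℝ) (hX : Measurable X) (hint : Integrable X μ)
    (θ : ℝ) (hθ : θ ∈ Set.Ioo 0 Real.pi)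
    (heq : θ * Real.sin θ + Real.cos θ - 1 = 0)
    (huniq : ∀ x ∈ Set.Ioo 0 Real.pi,
      x * Real.sin x + Real.cos x - 1 = 0 → x = θ)
    (t : ℝ) :
    ‖(∫ ω, Complex.exp (Complex.I * t * X ω) ∂μ) - 1‖ ≤
      ((1 - Real.cos θ) / θ) * |t| * (∫ ω, |X ω| ∂μ) +
      (Real.sin θ / θ) * |t| * |∫ ω, X ω ∂μ| ∧
    ((∫ ω, X ω ∂μ) = 0 →
      ‖(∫ ω, Complex.exp (Complex.I * t * X ω) ∂μ) - 1‖ ≤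
        0.7247 * |t| * (∫ ω, |X ω| ∂μ)) := by
  obtain ⟨hθ0, hθπ⟩ := hθ
  obtain ⟨hl, hu⟩ := theta_loc θ ⟨hθ0, hθπ⟩ heq huniq
  have hθne : θ ≠ 0 := ne_of_gt hθ0
  obtain ⟨s, hsθ⟩ : ∃ s, Real.sin θ = s := ⟨_, rfl⟩
  obtain ⟨c, hcdef⟩ : ∃ c, Real.sin θ / θ = c := ⟨_, rfl⟩
  have hspos : 0 < s := hsθ ▸ Real.sin_pos_of_pos_of_lt_pi hθ0 hθπ
  have hκ : (1 - Real.cos θ) / θ = s := by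
    rw [← hsθ]
    field_simp
    linear_combination -heq
  rw [hκ, hcdef]
  have hA2 : s*θ + Real.cos θ - 1 = 0 := by rw [← hsθ]; linear_combination heq
  have hpy : s^2 + (Real.cos θ)^2 = 1 := by rw [← hsθ]; exact Real.sin_sq_add_cos_sq θ
  have hcθ : c*θ = s := by rw [← hcdef, ← hsθ]; field_simp
  have key := key_main θ s c hθ0 hspos hsθ hA2 hpy hcθ hl hu
  have h2s : s*(s*(1+θ^2)) = s*(2*θ) := by
    linear_combination hpy + (s*θ - 1 - Real.cos θ)*hA2
  have hs1p : s*(1+θ^2) = 2*θ := mul_left_cancel₀ (ne_of_gt hspos) h2s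
  have hc0 : 0 ≤ c := by nlinarith [hcθ, hspos, hθ0]
  -- squared pointwise bound, all y
  have hsq : ∀ y : ℝ, (Real.cos y - 1)^2 + (Real.sin y - c*y)^2 ≤ (s * |y|)^2 := by
    intro y
    have h1 : (s * |y|)^2 = s^2*y^2 := by rw [mul_pow, sq_abs]
    rcases le_total 0 y with hy | hy
    · have h := key y hy
      nlinarith [Real.sin_sq_add_cos_sq y]
    · have h := key (-y) (by linarith)
      rw [Real.cos_neg, Real.sin_neg] at h
      nlinarith [Real.sin_sq_add_cos_sq y]
  -- complex pointwise bound
  have hnorm : ∀ y : ℝ, ‖Complex.exp (Complex.I*(y:ℂ)) - 1 - Complex.I*((c*y : ℝ):ℂ)‖ ≤ s * |y| := by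
    intro y
    have hexp : Complex.exp (Complex.I*(y:ℂ)) = ((Real.cos y : ℝ):ℂ) + ((Real.sin y : ℝ):ℂ) * Complex.I := by
      rw [mul_comm, Complex.exp_mul_I, Complex.ofReal_cos, Complex.ofReal_sin]
    have hre : (Complex.exp (Complex.I*(y:ℂ)) - 1 - Complex.I*((c*y : ℝ):ℂ)).re = Real.cos y - 1 := by
      rw [hexp]; simp [Complex.cos_ofReal_re, Complex.sin_ofReal_re]
    have him : (Complex.exp (Complex.I*(y:ℂ)) - 1 - Complex.I*((c*y : ℝ):ℂ)).im = Real.sin y - c*y := by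
      rw [hexp]; simp [Complex.cos_ofReal_re, Complex.sin_ofReal_re]
    have habs : ‖Complex.exp (Complex.I*(y:ℂ)) - 1 - Complex.I*((c*y : ℝ):ℂ)‖^2
        = (Real.cos y - 1)^2 + (Real.sin y - c*y)^2 := by
      rw [Complex.sq_norm, Complex.normSq_apply, hre, him]; ring
    have h2 := hsq y
    nlinarith [norm_nonneg (Complex.exp (Complex.I*(y:ℂ)) - 1 - Complex.I*((c*y : ℝ):ℂ)),
      mul_nonneg (le_of_lt hspos) (abs_nonneg y), habs]
  -- integrability
  have hml : Measurable (fun ω => Complex.I*(t:ℂ)*((X ω : ℝ):ℂ)) :=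
    (Complex.measurable_ofReal.comp hX).const_mul (Complex.I*t)
  have hm1 : AEStronglyMeasurable (fun ω => Complex.exp (Complex.I*(t:ℂ)*((X ω:ℝ):ℂ))) μ :=
    (Complex.measurable_exp.comp hml).aestronglyMeasurable
  have hint1 : Integrable (fun ω => Complex.exp (Complex.I*(t:ℂ)*((X ω:ℝ):ℂ))) μ := by
    apply Integrable.mono' (integrable_const (1:ℝ)) hm1
    filter_upwards with ω
    have hre0 : (Complex.I*(t:ℂ)*((X ω:ℝ):ℂ)).re = 0 := by simp
    rw [Complex.norm_exp, hre0, Real.exp_zero]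
  have hint2 : Integrable (fun ω => Complex.I*(((c*t)*X ω : ℝ):ℂ)) μ :=
    ((hint.const_mul (c*t)).ofReal).const_mul Complex.I
  have hintg : Integrable (fun ω => Complex.exp (Complex.I*(t:ℂ)*((X ω:ℝ):ℂ)) - 1
      - Complex.I*(((c*t)*X ω : ℝ):ℂ)) μ := (hint1.sub (integrable_const 1)).sub hint2
  have hsplit : ∫ ω, (Complex.exp (Complex.I*(t:ℂ)*((X ω:ℝ):ℂ)) - 1 - Complex.I*(((c*t)*X ω : ℝ):ℂ)) ∂μ
      = (∫ ω, Complex.exp (Complex.I*(t:ℂ)*((X ω:ℝ):ℂ)) ∂μ) - 1 - Complex.I*(((c*t)*(∫ ω, X ω ∂μ) : ℝ):ℂ) := by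
    have hgsub : Integrable (fun ω => Complex.exp (Complex.I*(t:ℂ)*((X ω:ℝ):ℂ)) - 1) μ :=
      hint1.sub (integrable_const 1)
    rw [integral_sub hgsub hint2,
      integral_sub hint1 (integrable_const 1), integral_const, probReal_univ,
      one_smul]
    have hoc1 : ∫ ω, (((c*t)*X ω : ℝ):ℂ) ∂μ = ((∫ ω, (c*t)*X ω ∂μ : ℝ):ℂ) :=
      integral_ofReal (𝕜 := ℂ)
    have hoc : ∫ ω, (((c*t)*X ω : ℝ):ℂ) ∂μ = (((c*t)*(∫ ω, X ω ∂μ) : ℝ):ℂ) := by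
      rw [hoc1, integral_const_mul]
    rw [integral_const_mul, hoc]
  -- pointwise bound on integrand
  have hptw : ∀ ω, ‖Complex.exp (Complex.I*(t:ℂ)*((X ω:ℝ):ℂ)) - 1 - Complex.I*(((c*t)*X ω : ℝ):ℂ)‖
      ≤ s * |t| * |X ω| := by
    intro ω
    have h := hnorm (t * X ω)
    have e1 : Complex.I*((t*X ω : ℝ):ℂ) = Complex.I*(t:ℂ)*((X ω:ℝ):ℂ) := by push_cast; ring
    have e2 : ((c*(t*X ω) : ℝ):ℂ) = (((c*t)*X ω : ℝ):ℂ) := by push_cast; ring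
    rw [e1, e2] at h
    calc ‖Complex.exp (Complex.I*(t:ℂ)*((X ω:ℝ):ℂ)) - 1 - Complex.I*(((c*t)*X ω : ℝ):ℂ)‖
        ≤ s * |t*X ω| := h
      _ = s * |t| * |X ω| := by rw [abs_mul]; ring
  have hIg : ‖∫ ω, (Complex.exp (Complex.I*(t:ℂ)*((X ω:ℝ):ℂ)) - 1 - Complex.I*(((c*t)*X ω : ℝ):ℂ)) ∂μ‖
      ≤ ∫ ω, s * |t| * |X ω| ∂μ := by
    refine (norm_integral_le_integral_norm _).trans ?_
    apply integral_mono_of_nonneg (Filter.Eventually.of_forall (fun ω => norm_nonneg _))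
      ((hint.abs.const_mul (s * |t|)).congr ?_) (Filter.Eventually.of_forall hptw)
    · filter_upwards with ω
      ring
  have hIeq : (∫ ω, s * |t| * |X ω| ∂μ) = s * |t| *(∫ ω, |X ω| ∂μ) := by
    have : (fun ω => s * |t| * |X ω|) = fun ω => (s * |t|) * |X ω| := by funext ω; ring
    rw [this, integral_const_mul]
  have hIterm : ‖Complex.I*(((c*t)*(∫ ω, X ω ∂μ) : ℝ):ℂ)‖ = c * |t| * |∫ ω, X ω ∂μ| := by
    rw [norm_mul, Complex.norm_I, one_mul, Complex.norm_real, Real.norm_eq_abs,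
      abs_mul, abs_mul, abs_of_nonneg hc0]
  have htri : ‖(∫ ω, Complex.exp (Complex.I*(t:ℂ)*((X ω:ℝ):ℂ)) ∂μ) - 1‖
      ≤ s * |t| *(∫ ω, |X ω| ∂μ) + c * |t| * |∫ ω, X ω ∂μ| := by
    have hid : (∫ ω, Complex.exp (Complex.I*(t:ℂ)*((X ω:ℝ):ℂ)) ∂μ) - 1
        = (∫ ω, (Complex.exp (Complex.I*(t:ℂ)*((X ω:ℝ):ℂ)) - 1 - Complex.I*(((c*t)*X ω : ℝ):ℂ)) ∂μ)
          + Complex.I*(((c*t)*(∫ ω, X ω ∂μ) : ℝ):ℂ) := by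
      rw [hsplit]; ring
    rw [hid]
    refine (norm_add_le _ _).trans ?_
    rw [hIterm]
    exact add_le_add (hIg.trans (le_of_eq hIeq)) (le_refl _)
  constructor
  · exact htri
  · intro h0
    rw [h0] at htri
    simp only [abs_zero, mul_zero, add_zero] at htri
    have hs7 : s ≤ 0.7247 := by
      have hp2 : (0:ℝ) < 1 + θ^2 := by positivity
      nlinarith [hs1p, sq_nonneg (θ - 2331/1000), hp2]
    have hpos : 0 ≤ |t| * (∫ ω, |X ω| ∂μ) :=
      mul_nonneg (abs_nonneg t) (integral_nonneg (fun ω => abs_nonneg _))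
    nlinarith [htri, hs7, hpos]
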